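/- arXiv:2302.13250 — 5 statements merged into one kernel-verified Lean document; each statement's English description precedes it below -/
import Mathlib

section
/- Let L be a non-abelian minimal subnormal subgroup of a finite group G. Then the normal closure L^G of L in G is a minimal normal subgroup of G. -/
open Subgroup
open scoped Pointwise

section Defs

variable {ι : Type*}

/-- `σ` is a partition of the set of all primes. -/
structure IsPrimePartition (σ : ι → Set ℕ) : Prop where
  prime_of_mem : ∀ i p, p ∈ σ i → p.Prime
  existsUnique_mem : ∀ p : ℕ, p.Prime → ∃! i, p ∈ σ i

/-- every prime dividing `n` lies in the block `σ i`. -/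
def IsSigmaNumber (σ : ι → Set ℕ) (i : ι) (n : ℕ) : Prop :=
  ∀ p : ℕ, p.Prime → p ∣ n → p ∈ σ i

/-- `G` is a `σ i`-group. -/
def IsSigmaIGroup (σ : ι → Set ℕ) (i : ι) (G : Type*) [Group G] : Prop :=
  IsSigmaNumber σ i (Nat.card G)

/-- `G` is σ-primary: it is a `σ i`-group for some `i`. -/
def IsSigmaPrimary (σ : ι → Set ℕ) (G : Type*) [Group G] : Prop :=
  ∃ i, IsSigmaIGroup σ i G

/-- `G` is σ-nilpotent: `G` is the internal direct product of normal
σ-primary subgroups (one `σ i`-subgroup for each block). -/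
def IsSigmaNilpotent (σ : ι → Set ℕ) (G : Type*) [Group G] : Prop :=
  ∃ H : ι → Subgroup G, (∀ i, (H i).Normal) ∧ (∀ i, IsSigmaIGroup σ i ↥(H i)) ∧
    iSupIndep H ∧ iSup H = ⊤

/-- One step in a σ-subnormal chain: `A ≤ B` and either `A` is normal in `B` or
`B/(A_B)` (quotient by the normal core of `A` in `B`) is σ-primary. -/
def SigmaSubnormalStep (σ : ι → Set ℕ) {G : Type*} [Group G] (A B : Subgroup G) : Prop :=
  A ≤ B ∧ (((A.subgroupOf B).Normal) ∨
    IsSigmaPrimary σ (↥B ⧸ (A.subgroupOf B).normalCore))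

/-- `A` is σ-subnormal in `G`. -/
def IsSigmaSubnormal (σ : ι → Set ℕ) {G : Type*} [Group G] (A : Subgroup G) : Prop :=
  ∃ n, ∃ C : Fin (n + 1) → Subgroup G, C 0 = A ∧ C (Fin.last n) = ⊤ ∧
    ∀ k : Fin n, SigmaSubnormalStep σ (C k.castSucc) (C k.succ)

/-- `A` is subnormal in `G`. -/
def IsSubnormalSub {G : Type*} [Group G] (A : Subgroup G) : Prop :=
  ∃ n, ∃ C : Fin (n + 1) → Subgroup G, C 0 = A ∧ C (Fin.last n) = ⊤ ∧
    ∀ k : Fin n, C k.castSucc ≤ C k.succ ∧ ((C k.castSucc).subgroupOf (C k.succ)).Normal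

/-- `M` is a modular subgroup of `G`: a modular element of the subgroup lattice. -/
def IsModularSubgroup {G : Type*} [Group G] (M : Subgroup G) : Prop :=
  (∀ X Z : Subgroup G, X ≤ Z → X ⊔ (M ⊓ Z) = (X ⊔ M) ⊓ Z) ∧
  (∀ Y Z : Subgroup G, M ≤ Z → M ⊔ (Y ⊓ Z) = (M ⊔ Y) ⊓ Z)

/-- `A` is submodular in `G`: there is a chain from `A` to `G` with each
term modular in the next. -/
def IsSubmodular {G : Type*} [Group G] (A : Subgroup G) : Prop :=
  ∃ n, ∃ C : Fin (n + 1) → Subgroup G, C 0 = A ∧ C (Fin.last n) = ⊤ ∧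
    ∀ k : Fin n, C k.castSucc ≤ C k.succ ∧
      IsModularSubgroup ((C k.castSucc).subgroupOf (C k.succ))

/-- `H` is a Hall `σ i`-subgroup of `G`. -/
def IsHallSigmaI (σ : ι → Set ℕ) (i : ι) {G : Type*} [Group G] (H : Subgroup G) : Prop :=
  IsSigmaNumber σ i (Nat.card H) ∧ ∀ p : ℕ, p.Prime → p ∣ H.index → p ∉ σ i

/-- `G` is σ-full: it has a Hall `σ i`-subgroup for every `σ i ∈ σ(G)`. -/
def IsSigmaFull (σ : ι → Set ℕ) (G : Type*) [Group G] : Prop :=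
  ∀ i, (∃ p : ℕ, p.Prime ∧ p ∈ σ i ∧ p ∣ Nat.card G) →
    ∃ H : Subgroup G, IsHallSigmaI σ i H

/-- Two subgroups permute. -/
def Permutes {G : Type*} [Group G] (A B : Subgroup G) : Prop :=
  (A : Set G) * (B : Set G) = (B : Set G) * (A : Set G)

/-- `A` is σ-permutable in `G`: it permutes with every Hall `σ i`-subgroup of `G`
(hence with all their conjugates). -/
def IsSigmaPermutable (σ : ι → Set ℕ) {G : Type*} [Group G] (A : Subgroup G) : Prop :=
  ∀ i, ∀ H : Subgroup G, IsHallSigmaI σ i H → Permutes A H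

/-- `A` is quasinormal (permutable) in `G`. -/
def IsQuasinormal {G : Type*} [Group G] (A : Subgroup G) : Prop :=
  ∀ B : Subgroup G, Permutes A B

/-- `A` is σ-quasinormal in `G`: modular and σ-subnormal. -/
def IsSigmaQuasinormal (σ : ι → Set ℕ) {G : Type*} [Group G] (A : Subgroup G) : Prop :=
  IsModularSubgroup A ∧ IsSigmaSubnormal σ A

/-- σ-permutability is a transitive relation on `G`. -/
def IsPSigmaTGroup (σ : ι → Set ℕ) (G : Type*) [Group G] : Prop :=
  ∀ K H : Subgroup G, H ≤ K → IsSigmaPermutable σ (H.subgroupOf K) →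
    IsSigmaPermutable σ K → IsSigmaPermutable σ H

/-- `H/K` is a chief factor of `G`. -/
def IsChiefFactor (G : Type*) [Group G] (K H : Subgroup G) : Prop :=
  K.Normal ∧ H.Normal ∧ K < H ∧
    ∀ N : Subgroup G, N.Normal → K ≤ N → N ≤ H → N = K ∨ N = H

/-- `G` is σ-soluble: every chief factor of `G` is σ-primary. -/
def IsSigmaSoluble (σ : ι → Set ℕ) (G : Type*) [Group G] : Prop :=
  ∀ K H : Subgroup G, ∀ hc : IsChiefFactor G K H,
    letI := hc.1; IsSigmaPrimary σ (↥H ⧸ K.subgroupOf H)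

/-- The σ-nilpotent residual `G^{𝔑_σ}` of `G`. -/
def sigmaNilpotentResidual (σ : ι → Set ℕ) (G : Type*) [Group G] : Subgroup G :=
  sInf {N : Subgroup G | ∃ h : N.Normal, letI := h; IsSigmaNilpotent σ (G ⧸ N)}

/-- The σ-soluble residual `G^{𝔖_σ}` of `G`. -/
def sigmaSolubleResidual (σ : ι → Set ℕ) (G : Type*) [Group G] : Subgroup G :=
  sInf {N : Subgroup G | ∃ h : N.Normal, letI := h; IsSigmaSoluble σ (G ⧸ N)}

/-- `G` is a σ-SC-group: every chief factor of `G` below `G^{𝔑_σ}` is simple. -/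
def IsSigmaSCGroup (σ : ι → Set ℕ) (G : Type*) [Group G] : Prop :=
  ∀ K H : Subgroup G, ∀ hc : IsChiefFactor G K H, H ≤ sigmaNilpotentResidual σ G →
    letI := hc.1; IsSimpleGroup (↥H ⧸ K.subgroupOf H)

/-- `G` is σ-supersoluble: every chief factor of `G` below `G^{𝔑_σ}` is cyclic. -/
def IsSigmaSupersoluble (σ : ι → Set ℕ) (G : Type*) [Group G] : Prop :=
  ∀ K H : Subgroup G, ∀ hc : IsChiefFactor G K H, H ≤ sigmaNilpotentResidual σ G →
    letI := hc.1; IsCyclic (↥H ⧸ K.subgroupOf H)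

/-- The σ-supersoluble residual `G^{𝔘_σ}` of `G`. -/
def sigmaSupersolubleResidual (σ : ι → Set ℕ) (G : Type*) [Group G] : Subgroup G :=
  sInf {N : Subgroup G | ∃ h : N.Normal, letI := h; IsSigmaSupersoluble σ (G ⧸ N)}

/-- The soluble radical `G_𝔖`: the largest soluble normal subgroup of `G`. -/
def solubleRadical (G : Type*) [Group G] : Subgroup G :=
  sSup {N : Subgroup G | N.Normal ∧ IsSolvable ↥N}

/-- `O_{σ i}(G)`: the largest normal `σ i`-subgroup of `G`. -/
def sigmaCore (σ : ι → Set ℕ) (i : ι) (G : Type*) [Group G] : Subgroup G :=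
  sSup {N : Subgroup G | N.Normal ∧ IsSigmaIGroup σ i ↥N}

/-- `O^{σ i}(G)`: the smallest normal subgroup of `G` with `σ i`-quotient. -/
def sigmaIResidual (σ : ι → Set ℕ) (i : ι) (G : Type*) [Group G] : Subgroup G :=
  sInf {N : Subgroup G | ∃ h : N.Normal, letI := h; IsSigmaIGroup σ i (G ⧸ N)}

end Defs



namespace Statement1Aux

variable {G : Type*} [Group G]

/-- Conjugate of a subgroup. -/
def cmap (g : G) (A : Subgroup G) : Subgroup G :=
  A.map (MulAut.conj g).toMonoidHom

lemma mem_cmap {g x : G} {A : Subgroup G} : x ∈ cmap g A ↔ g⁻¹ * x * g ∈ A := by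
  simp only [cmap, Subgroup.mem_map, MulEquiv.coe_toMonoidHom, MulAut.conj_apply]
  constructor
  · rintro ⟨a, ha, rfl⟩
    have : g⁻¹ * (g * a * g⁻¹) * g = a := by group
    rwa [this]
  · intro h
    exact ⟨g⁻¹ * x * g, h, by group⟩

lemma cmap_bot (g : G) : cmap g (⊥ : Subgroup G) = ⊥ := by
  ext x; simp only [mem_cmap, Subgroup.mem_bot]
  constructor
  · intro h; have : x = g * (g⁻¹ * x * g) * g⁻¹ := by group
    rw [this, h]; group
  · rintro rfl; group

lemma cmap_top (g : G) : cmap g (⊤ : Subgroup G) = ⊤ := by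
  ext x; simp [mem_cmap]

lemma cmap_one (A : Subgroup G) : cmap 1 A = A := by
  ext x; simp [mem_cmap]

lemma cmap_mono {g : G} {A B : Subgroup G} (h : A ≤ B) : cmap g A ≤ cmap g B := by
  intro x hx; exact mem_cmap.mpr (h (mem_cmap.mp hx))

lemma cmap_cmap (g h : G) (A : Subgroup G) : cmap g (cmap h A) = cmap (g * h) A := by
  ext x
  rw [mem_cmap, mem_cmap, mem_cmap]
  constructor
  · intro hx
    have : (g * h)⁻¹ * x * (g * h) = h⁻¹ * (g⁻¹ * x * g) * h := by group
    rwa [this]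
  · intro hx
    have : h⁻¹ * (g⁻¹ * x * g) * h = (g * h)⁻¹ * x * (g * h) := by group
    rwa [this]

lemma cmap_inv_cmap (g : G) (A : Subgroup G) : cmap g⁻¹ (cmap g A) = A := by
  rw [cmap_cmap, inv_mul_cancel, cmap_one]

lemma cmap_commutator (g : G) (A B : Subgroup G) :
    cmap g ⁅A, B⁆ = ⁅cmap g A, cmap g B⁆ :=
  Subgroup.map_commutator A B _

lemma cmap_normal {g : G} {N : Subgroup G} (hN : N.Normal) : cmap g N = N := by
  ext x
  rw [mem_cmap]
  constructor
  · intro h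
    have := hN.conj_mem _ h g
    have hx : g * (g⁻¹ * x * g) * g⁻¹ = x := by group
    rwa [hx] at this
  · intro h
    simpa using hN.conj_mem _ h g⁻¹

lemma cmap_ne_bot {g : G} {A : Subgroup G} (h : A ≠ ⊥) : cmap g A ≠ ⊥ := by
  intro hc
  apply h
  have := congrArg (cmap g⁻¹) hc
  rwa [cmap_inv_cmap, cmap_bot] at this

/-- Top-peeling subnormality: `A` is subnormal in `T` with a chain of length `n`. -/
def SubnormalIn : ℕ → Subgroup G → Subgroup G → Prop
  | 0, A, T => A = T
  | (n+1), A, T => ∃ B : Subgroup G, SubnormalIn n A B ∧ B ≤ T ∧ ⁅T, B⁆ ≤ B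

lemma SubnormalIn.le : ∀ {n : ℕ} {A T : Subgroup G}, SubnormalIn n A T → A ≤ T
  | 0, _, _, h => le_of_eq h
  | (_+1), _, _, ⟨_, h1, h2, _⟩ => (SubnormalIn.le h1).trans h2

lemma SubnormalIn.conj {g : G} : ∀ {n : ℕ} {A T : Subgroup G},
    SubnormalIn n A T → SubnormalIn n (cmap g A) (cmap g T)
  | 0, _, _, h => congrArg _ h
  | (_+1), _, _, ⟨B, h1, h2, h3⟩ =>
    ⟨cmap g B, SubnormalIn.conj h1, cmap_mono h2, by
      rw [← cmap_commutator]; exact cmap_mono h3⟩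

lemma SubnormalIn.bot_extend : ∀ {n : ℕ} {A T K : Subgroup G},
    SubnormalIn n A T → K ≤ A → ⁅A, K⁆ ≤ K → SubnormalIn (n+1) K T
  | 0, A, T, K, h, hKA, hAK => ⟨K, rfl, hKA.trans (le_of_eq h), by rw [← h]; exact hAK⟩
  | (_+1), _, _, _, ⟨B, h1, h2, h3⟩, hKA, hAK =>
    ⟨B, SubnormalIn.bot_extend h1 hKA hAK, h2, h3⟩

lemma SubnormalIn.inf : ∀ {n : ℕ} {A T' : Subgroup G}, SubnormalIn n A T' →
    ∀ {T B : Subgroup G}, T' ≤ T → ⁅T, B⁆ ≤ B → SubnormalIn n (A ⊓ B) (T' ⊓ B)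
  | 0, A, _, h, _, B, _, _ => show A ⊓ B = _ ⊓ B by rw [h]
  | (_+1), _, _, ⟨M, h1, h2, h3⟩, T, B, hT, hB =>
    ⟨M ⊓ B, SubnormalIn.inf h1 (h2.trans hT) hB,
      inf_le_inf_right B h2,
      le_inf
        ((Subgroup.commutator_mono inf_le_left inf_le_left).trans h3)
        ((Subgroup.commutator_mono (inf_le_left.trans hT) inf_le_right).trans hB)⟩

open scoped commutatorElement in
lemma subgroupOf_normal_iff {A B : Subgroup G} (hAB : A ≤ B) :
    (A.subgroupOf B).Normal ↔ ⁅B, A⁆ ≤ A := by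
  constructor
  · intro h
    rw [Subgroup.commutator_le]
    intro b hb a ha
    have := h.conj_mem ⟨a, hAB ha⟩ (by rwa [Subgroup.mem_subgroupOf]) ⟨b, hb⟩
    rw [Subgroup.mem_subgroupOf] at this
    have h2 : (b * a * b⁻¹ : G) ∈ A := this
    have : ⁅b, a⁆ = (b * a * b⁻¹) * a⁻¹ := by group
    rw [this]
    exact mul_mem h2 (inv_mem ha)
  · intro h
    constructor
    intro x hx b
    rw [Subgroup.mem_subgroupOf] at hx ⊢
    have hc : ⁅(b : G), (x : G)⁆ ∈ A := Subgroup.commutator_le.mp h _ b.2 _ hx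
    have : ((b * x * b⁻¹ : B) : G) = ⁅(b : G), (x : G)⁆ * (x : G) := by
      push_cast; group
    rw [this]
    exact mul_mem hc hx

lemma chain_to_subnormalIn : ∀ (n : ℕ) (C : Fin (n+1) → Subgroup G),
    (∀ k : Fin n, C k.castSucc ≤ C k.succ ∧ ((C k.castSucc).subgroupOf (C k.succ)).Normal) →
    SubnormalIn n (C 0) (C (Fin.last n)) := by
  intro n
  induction n with
  | zero => intro C _; rfl
  | succ n ih =>
    intro C hC
    refine ⟨C (Fin.last n).castSucc, ?_, ?_, ?_⟩
    · have := ih (fun j => C j.castSucc) (fun k => by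
        have h := hC k.castSucc
        rwa [Fin.succ_castSucc] at h)
      simpa using this
    · exact (hC (Fin.last n)).1
    · exact (subgroupOf_normal_iff (hC (Fin.last n)).1).mp (hC (Fin.last n)).2

lemma subnormalIn_to_chain : ∀ (n : ℕ) (A T : Subgroup G), SubnormalIn n A T →
    ∃ C : Fin (n+1) → Subgroup G, C 0 = A ∧ C (Fin.last n) = T ∧
      ∀ k : Fin n, C k.castSucc ≤ C k.succ ∧ ((C k.castSucc).subgroupOf (C k.succ)).Normal := by
  intro n
  induction n with
  | zero =>
    intro A T h
    exact ⟨fun _ => A, rfl, h, fun k => k.elim0⟩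
  | succ n ih =>
    rintro A T ⟨B, h1, h2, h3⟩
    obtain ⟨C, hC0, hCl, hCs⟩ := ih A B h1
    refine ⟨Fin.snoc C T, ?_, ?_, ?_⟩
    · have : (0 : Fin (n+2)) = (0 : Fin (n+1)).castSucc := by simp
      rw [this, Fin.snoc_castSucc, hC0]
    · rw [Fin.snoc_last]
    · intro k
      refine Fin.lastCases ?_ ?_ k
      · rw [Fin.succ_last, Fin.snoc_last, Fin.snoc_castSucc, hCl]
        exact ⟨h2, (subgroupOf_normal_iff h2).mpr h3⟩
      · intro j
        rw [Fin.succ_castSucc, Fin.snoc_castSucc, Fin.snoc_castSucc]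
        exact hCs j

lemma commutator_eq_bot_iff {A B : Subgroup G} :
    ⁅A, B⁆ = ⊥ ↔ ∀ a ∈ A, ∀ b ∈ B, a * b = b * a := by
  rw [eq_bot_iff, Subgroup.commutator_le]
  simp only [Subgroup.mem_bot]
  constructor
  · intro h a ha b hb
    exact commutatorElement_eq_one_iff_mul_comm.mp (h a ha b hb)
  · intro h a ha b hb
    exact commutatorElement_eq_one_iff_mul_comm.mpr (h a ha b hb)

section Key

variable {L : Subgroup G} (hperf : ⁅L, L⁆ = L)
  (hsimp : ∀ K : Subgroup G, K ≤ L → ⁅L, K⁆ ≤ K → K = ⊥ ∨ K = L)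
  (hne : L ≠ ⊥)

include hperf hsimp hne in
/-- Key lemma B: if `L` is subnormal in `T`, `N` is normalized by `T` with
`L ⊓ N = ⊥`, then `⁅L, N⁆ = ⊥`. -/
lemma lemB : ∀ (n : ℕ) (T N : Subgroup G), SubnormalIn n L T → N ≤ T →
    ⁅T, N⁆ ≤ N → L ⊓ N = ⊥ → ⁅L, N⁆ = ⊥ := by
  intro n
  induction n with
  | zero =>
    intro T N hLT hNT hTN hLN
    have hT : L = T := hLT
    subst hT
    rcases hsimp N hNT hTN with h | h
    · subst h
      exact Subgroup.commutator_bot_right L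
    · exfalso
      apply hne
      rw [h, inf_idem] at hLN
      exact hLN
  | succ n ih =>
    rintro T N ⟨M, hLM, hMT, hTM⟩ hNT hTN hLN
    have hLM' : L ≤ M := hLM.le
    set N' := N ⊓ M with hN'
    have hN'M : N' ≤ M := inf_le_right
    have hMN' : ⁅M, N'⁆ ≤ N' := by
      apply le_inf
      · exact (Subgroup.commutator_mono hMT inf_le_left).trans hTN
      · rw [Subgroup.commutator_comm]
        exact (Subgroup.commutator_mono (inf_le_right.trans hMT) le_rfl).trans hTM
    have hLN' : L ⊓ N' ≤ ⊥ := by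
      rw [← hLN]; exact inf_le_inf_left L inf_le_left
    have hIH : ⁅L, N'⁆ = ⊥ := ih M N' hLM hN'M hMN' (le_bot_iff.mp hLN')
    have hLNsub : ⁅L, N⁆ ≤ N' := by
      apply le_inf
      · exact (Subgroup.commutator_mono (hLM'.trans hMT) le_rfl).trans hTN
      · rw [Subgroup.commutator_comm]
        exact (Subgroup.commutator_mono hNT hLM').trans hTM
    have h1 : ⁅⁅L, N⁆, L⁆ = ⊥ := by
      rw [eq_bot_iff, ← hIH, Subgroup.commutator_comm]
      exact Subgroup.commutator_mono le_rfl hLNsub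
    have h2 : ⁅⁅N, L⁆, L⁆ = ⊥ := by
      rw [Subgroup.commutator_comm N L]
      exact h1
    have h3 := Subgroup.commutator_commutator_eq_bot_of_rotate h1 h2
    rwa [hperf] at h3

include hperf hsimp hne in
/-- Key lemma C: if `K` is subnormal in `T` and `L` is subnormal in `T`, then
`L ≤ K` or `⁅L, K⁆ = ⊥`. -/
lemma lemC : ∀ (m : ℕ) (K T : Subgroup G) (n : ℕ), SubnormalIn m K T →
    SubnormalIn n L T → L ≤ K ∨ ⁅L, K⁆ = ⊥ := by
  intro m
  induction m with
  | zero =>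
    intro K T n hK hL
    have : K = T := hK
    subst this
    exact Or.inl hL.le
  | succ m ih =>
    rintro K T n ⟨B, hKB, hBT, hTB⟩ hL
    have hLT : L ≤ T := hL.le
    have hLB : ⁅L, L ⊓ B⁆ ≤ L ⊓ B := by
      apply le_inf
      · exact (Subgroup.commutator_mono le_rfl inf_le_left).trans (le_of_eq hperf)
      · exact (Subgroup.commutator_mono hLT inf_le_right).trans hTB
    rcases hsimp (L ⊓ B) inf_le_left hLB with h | h
    · right
      have hLBbot : ⁅L, B⁆ = ⊥ := lemB hperf hsimp hne n T B hL hBT hTB h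
      rw [eq_bot_iff, ← hLBbot]
      exact Subgroup.commutator_mono le_rfl hKB.le
    · have hLleB : L ≤ B := by
        rw [← h]; exact inf_le_right
      have hchain : SubnormalIn n (L ⊓ B) (T ⊓ B) := hL.inf le_rfl hTB
      rw [h, inf_eq_right.mpr hBT] at hchain
      exact ih K B n hKB hchain

end Key

end Statement1Aux

open Statement1Aux in
/-- If `L` is a non-abelian minimal subnormal subgroup of a finite group `G`,
then the normal closure `L^G` is a minimal normal subgroup of `G`. -/
theorem statement_1 {G : Type*} [Group G] [Finite G] (L : Subgroup G)
    (hsub : IsSubnormalSub L) (hne : L ≠ ⊥)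
    (hmin : ∀ S : Subgroup G, IsSubnormalSub S → S ≤ L → S = ⊥ ∨ S = L)
    (hnonab : ¬ ∀ a ∈ L, ∀ b ∈ L, a * b = b * a) :
    Subgroup.normalClosure (L : Set G) ≠ ⊥ ∧
      ∀ N : Subgroup G, N.Normal → N ≤ Subgroup.normalClosure (L : Set G) →
        N = ⊥ ∨ N = Subgroup.normalClosure (L : Set G) := by
  classical
  obtain ⟨n₀, C, hC0, hCl, hCstep⟩ := hsub
  have hchain : SubnormalIn n₀ L ⊤ := by
    have := chain_to_subnormalIn n₀ C hCstep
    rwa [hC0, hCl] at this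
  have hminS : ∀ (m : ℕ) (S : Subgroup G), SubnormalIn m S ⊤ → S ≤ L → S = ⊥ ∨ S = L := by
    intro m S hS hSL
    obtain ⟨D, hD0, hDl, hDs⟩ := subnormalIn_to_chain m S ⊤ hS
    exact hmin S ⟨m, D, hD0, hDl, hDs⟩ hSL
  have hsimp : ∀ K : Subgroup G, K ≤ L → ⁅L, K⁆ ≤ K → K = ⊥ ∨ K = L := by
    intro K hKL hLK
    exact hminS (n₀+1) K (hchain.bot_extend hKL hLK) hKL
  have hLLle : ⁅L, L⁆ ≤ L := Subgroup.commutator_le.mpr fun a ha b hb => by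
    rw [commutatorElement_def]
    exact mul_mem (mul_mem (mul_mem ha hb) (inv_mem ha)) (inv_mem hb)
  have hperf : ⁅L, L⁆ = L := by
    rcases hsimp ⁅L, L⁆ hLLle (Subgroup.commutator_mono le_rfl hLLle) with h | h
    · exfalso
      apply hnonab
      exact commutator_eq_bot_iff.mp h
    · exact h
  -- transported data for conjugates
  have hchain_g : ∀ g : G, SubnormalIn n₀ (cmap g L) ⊤ := by
    intro g
    have := hchain.conj (g := g)
    rwa [cmap_top] at this
  have hperf_g : ∀ g : G, ⁅cmap g L, cmap g L⁆ = cmap g L := by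
    intro g; rw [← cmap_commutator, hperf]
  have hne_g : ∀ g : G, cmap g L ≠ ⊥ := fun g => cmap_ne_bot hne
  have hsimp_g : ∀ (g : G) (K : Subgroup G), K ≤ cmap g L → ⁅cmap g L, K⁆ ≤ K →
      K = ⊥ ∨ K = cmap g L := by
    intro g K hK h2
    have hK' : cmap g⁻¹ K ≤ L := by
      have := cmap_mono (g := g⁻¹) hK
      rwa [cmap_inv_cmap] at this
    have h2' : ⁅L, cmap g⁻¹ K⁆ ≤ cmap g⁻¹ K := by
      have := cmap_mono (g := g⁻¹) h2
      rwa [cmap_commutator, cmap_inv_cmap] at this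
    have hback : cmap g (cmap g⁻¹ K) = K := by
      rw [cmap_cmap, mul_inv_cancel, cmap_one]
    rcases hsimp _ hK' h2' with h | h
    · left
      have := congrArg (cmap g) h
      rwa [hback, cmap_bot] at this
    · right
      have := congrArg (cmap g) h
      rwa [hback] at this
  -- trivial "center" for every conjugate
  have hZ : ∀ g : G, cmap g L ⊓ Subgroup.centralizer (cmap g L : Set G) = ⊥ := by
    intro g
    have hcm : ⁅cmap g L, cmap g L ⊓ Subgroup.centralizer (cmap g L : Set G)⁆ ≤ ⊥ := by
      rw [Subgroup.commutator_le]
      intro m hm k hk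
      rw [Subgroup.mem_bot, commutatorElement_eq_one_iff_mul_comm]
      exact Subgroup.mem_centralizer_iff.mp hk.2 m hm
    rcases hsimp_g g _ inf_le_left (hcm.trans bot_le) with h | h
    · exact h
    · exfalso
      apply hnonab
      have hMle : cmap g L ≤ Subgroup.centralizer (cmap g L : Set G) := by
        conv_lhs => rw [← h]
        exact inf_le_right
      intro a ha b hb
      have hag : g * a * g⁻¹ ∈ cmap g L := by
        rw [mem_cmap]
        have : g⁻¹ * (g * a * g⁻¹) * g = a := by group
        rwa [this]
      have hbg : g * b * g⁻¹ ∈ cmap g L := by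
        rw [mem_cmap]
        have : g⁻¹ * (g * b * g⁻¹) * g = b := by group
        rwa [this]
      have hcomm : (g * a * g⁻¹) * (g * b * g⁻¹) = (g * b * g⁻¹) * (g * a * g⁻¹) :=
        Subgroup.mem_centralizer_iff.mp (hMle hbg) _ hag
      calc a * b = g⁻¹ * ((g * a * g⁻¹) * (g * b * g⁻¹)) * g := by group
        _ = g⁻¹ * ((g * b * g⁻¹) * (g * a * g⁻¹)) * g := by rw [hcomm]
        _ = b * a := by group
  set J := Subgroup.normalClosure (L : Set G) with hJdef
  have hJn : J.Normal := Subgroup.normalClosure_normal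
  have hLJ : L ≤ J := Subgroup.le_normalClosure
  have hJbot : J ≠ ⊥ := fun h => hne (le_bot_iff.mp (hLJ.trans h.le))
  refine ⟨hJbot, ?_⟩
  intro N hN hNJ
  have hNtop : SubnormalIn 1 N ⊤ := by
    refine ⟨N, rfl, le_top, ?_⟩
    rw [Subgroup.commutator_le]
    intro g _ n hn
    rw [commutatorElement_def]
    exact mul_mem (hN.conj_mem n hn g) (inv_mem hn)
  rcases lemC hperf hsimp hne 1 N ⊤ n₀ hNtop hchain with hLN | hLN
  · right
    haveI := hN
    exact le_antisymm hNJ (Subgroup.normalClosure_le_normal (fun x hx => hLN hx))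
  · left
    have hconj : ∀ g : G, ⁅cmap g L, N⁆ = ⊥ := by
      intro g
      have := congrArg (cmap g) hLN
      rwa [cmap_commutator, cmap_normal hN, cmap_bot] at this
    have hpair : ∀ a b : G, cmap a L ≠ cmap b L → ⁅cmap a L, cmap b L⁆ = ⊥ := by
      intro a b hab
      rcases lemC (hperf_g a) (hsimp_g a) (hne_g a) n₀ (cmap b L) ⊤ n₀ (hchain_g b)
        (hchain_g a) with h | h
      · exfalso
        have h1 : cmap b⁻¹ (cmap a L) ≤ L := by
          have := cmap_mono (g := b⁻¹) h
          rwa [cmap_inv_cmap] at this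
        have h2 : SubnormalIn n₀ (cmap b⁻¹ (cmap a L)) ⊤ := by
          have := (hchain_g a).conj (g := b⁻¹)
          rwa [cmap_top] at this
        rcases hminS n₀ _ h2 h1 with h3 | h3
        · rw [cmap_cmap] at h3
          exact cmap_ne_bot hne h3
        · apply hab
          have := congrArg (cmap b) h3
          rwa [cmap_cmap, mul_inv_cancel, cmap_one] at this
      · exact h
    -- index over all conjugates
    haveI : Finite (Subgroup G) := Finite.of_injective _ (SetLike.coe_injective (A := Subgroup G))
    let ι' := {K : Subgroup G // ∃ g : G, cmap g L = K}
    haveI : Fintype ι' := Fintype.ofFinite ι'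
    let H : ι' → Subgroup G := fun i => i.1
    have hcomm : Pairwise fun i j : ι' => ∀ x y : G, x ∈ H i → y ∈ H j → Commute x y := by
      intro i j hij x y hx hy
      obtain ⟨a, ha⟩ := i.2
      obtain ⟨b, hb⟩ := j.2
      have hne' : cmap a L ≠ cmap b L := by
        rw [ha, hb]
        exact fun h => hij (Subtype.ext h)
      have hc := commutator_eq_bot_iff.mp (hpair a b hne')
      exact hc x (by rw [ha]; exact hx) y (by rw [hb]; exact hy)
    have hsup : (⨆ i, H i) = J := by
      apply le_antisymm
      · apply iSup_le
        rintro ⟨K, g, rfl⟩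
        intro x hx
        have hx' := hLJ (mem_cmap.mp hx)
        have h2 := hJn.conj_mem _ hx' g
        have hxx : g * (g⁻¹ * x * g) * g⁻¹ = x := by group
        rwa [hxx] at h2
      · have hnormal : (⨆ i, H i).Normal := by
          constructor
          intro x hx g
          refine Subgroup.iSup_induction H (C := fun y => g * y * g⁻¹ ∈ ⨆ i, H i) hx ?_ ?_ ?_
          · rintro ⟨K, a, rfl⟩ y hy
            have hy2 : g * y * g⁻¹ ∈ cmap (g * a) L := by
              rw [mem_cmap]
              have hy' : a⁻¹ * y * a ∈ L := by
                have := mem_cmap.mp hy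
                have he : a⁻¹ * y * a = a⁻¹ * y * a := rfl
                exact this
              have heq : (g * a)⁻¹ * (g * y * g⁻¹) * (g * a) = a⁻¹ * y * a := by group
              rwa [heq]
            exact Subgroup.mem_iSup_of_mem (⟨cmap (g*a) L, ⟨g*a, rfl⟩⟩ : ι') hy2
          · show g * (1:G) * g⁻¹ ∈ ⨆ i, H i
            have h1 : g * (1:G) * g⁻¹ = 1 := by group
            rw [h1]
            exact Subgroup.one_mem _
          · intro y z hy hz
            show g * (y * z) * g⁻¹ ∈ ⨆ i, H i
            have h2 : g * (y * z) * g⁻¹ = (g * y * g⁻¹) * (g * z * g⁻¹) := by group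
            rw [h2]
            exact mul_mem hy hz
        haveI := hnormal
        apply Subgroup.normalClosure_le_normal
        intro x hx
        exact Subgroup.mem_iSup_of_mem (⟨L, ⟨1, cmap_one L⟩⟩ : ι') hx
    rw [eq_bot_iff]
    intro z hz
    rw [Subgroup.mem_bot]
    have hzJ : z ∈ ⨆ i, H i := by
      rw [hsup]
      exact hNJ hz
    rw [← Subgroup.noncommPiCoprod_range (hcomm := hcomm)] at hzJ
    obtain ⟨f, hf⟩ := hzJ
    have key : ∀ i : ι', (f i : G) = 1 := by
      intro i
      obtain ⟨g, hg⟩ := i.2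
      set F : ι' → G := fun j => (f j : G) with hF
      have hcomm2 : ∀ x ∈ Finset.univ, ∀ y ∈ Finset.univ, x ≠ y → Commute (F x) (F y) :=
        fun x _ y _ hxy => hcomm hxy _ _ (f x).2 (f y).2
      have hz2 : Finset.univ.noncommProd F hcomm2 = z := by
        rw [← hf]
        rfl
      have hsplit := Finset.mul_noncommProd_erase Finset.univ (Finset.mem_univ i) F hcomm2
      rw [hz2] at hsplit
      set c := (Finset.univ.erase i).noncommProd F _ with hc
      have hcmem : c ∈ Subgroup.centralizer (H i : Set G) := by
        apply Subgroup.noncommProd_mem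
        intro j hj
        have hji : j ≠ i := Finset.ne_of_mem_erase hj
        rw [Subgroup.mem_centralizer_iff]
        intro h hh
        exact hcomm hji.symm h (F j) hh (f j).2
      have hzmem : z ∈ Subgroup.centralizer (H i : Set G) := by
        rw [Subgroup.mem_centralizer_iff]
        intro h hh
        exact commutator_eq_bot_iff.mp (hconj g) h (by rw [hg]; exact hh) z hz
      have hfi_mem : F i ∈ Subgroup.centralizer (H i : Set G) := by
        have he : F i = z * c⁻¹ := by
          rw [← hsplit]
          exact (mul_inv_cancel_right (F i) c).symm
        rw [he]
        exact mul_mem hzmem (inv_mem hcmem)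
      have hmem2 : F i ∈ cmap g L ⊓ Subgroup.centralizer (cmap g L : Set G) := by
        rw [hg]
        exact ⟨(f i).2, hfi_mem⟩
      rw [hZ g, Subgroup.mem_bot] at hmem2
      exact hmem2
    have hf1 : f = 1 := funext fun i => Subtype.ext (key i)
    rw [← hf, hf1, map_one]
end

section
/- Let H, K and N be pairwise permutable subgroups of a finite group G (i.e., HK = KH, HN = NH, KN = NK), and suppose H is a Hall subgroup of G. Then N ∩ HK = (N ∩ H)(N ∩ K). -/
open Subgroup
open scoped Pointwise

section St2Aux
variable {G : Type*} [Group G]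

def st2_mulSubgroup (A B : Subgroup G) (h : (A : Set G) * (B : Set G) = (B : Set G) * (A : Set G)) :
    Subgroup G where
  carrier := (A : Set G) * (B : Set G)
  one_mem' := ⟨1, A.one_mem, 1, B.one_mem, mul_one 1⟩
  mul_mem' := by
    rintro x y ⟨a1, ha1, b1, hb1, rfl⟩ ⟨a2, ha2, b2, hb2, rfl⟩
    have : b1 * a2 ∈ (A : Set G) * (B : Set G) := h ▸ Set.mul_mem_mul hb1 ha2
    obtain ⟨a3, ha3, b3, hb3, hab⟩ := this
    have hab' : a3 * b3 = b1 * a2 := hab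
    refine ⟨a1 * a3, A.mul_mem ha1 ha3, b3 * b2, B.mul_mem hb3 hb2, ?_⟩
    show a1 * a3 * (b3 * b2) = a1 * b1 * (a2 * b2)
    rw [mul_assoc a1, ← mul_assoc a3, hab']; group
  inv_mem' := by
    rintro x ⟨a, ha, b, hb, rfl⟩
    have : b⁻¹ * a⁻¹ ∈ (A : Set G) * (B : Set G) :=
      h ▸ Set.mul_mem_mul (B.inv_mem hb) (A.inv_mem ha)
    simpa [mul_inv_rev] using this

lemma st2_card_subgroupOf (A B : Subgroup G) :
    Nat.card (B.subgroupOf A) = Nat.card (A ⊓ B : Subgroup G) := by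
  rw [← inf_subgroupOf_left B A]
  exact Nat.card_congr (Subgroup.subgroupOfEquivOfLe inf_le_left).toEquiv

lemma st2_card_image_quotient (A B : Subgroup G) :
    Nat.card ((A : Set G).image ((↑) : G → G ⧸ B) : Set (G ⧸ B)) *
      Nat.card (A ⊓ B : Subgroup G) = Nat.card A := by
  classical
  let f : A ⧸ B.subgroupOf A → G ⧸ B := fun q =>
    Quotient.liftOn' q (fun a => QuotientGroup.mk (a : G)) (by
      intro a b hab
      rw [QuotientGroup.leftRel_apply, mem_subgroupOf] at hab
      exact QuotientGroup.eq.mpr (by simpa using hab))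
  have hinj : Function.Injective f := by
    intro q1 q2 hq
    obtain ⟨a, rfl⟩ := Quotient.exists_rep q1
    obtain ⟨b, rfl⟩ := Quotient.exists_rep q2
    change QuotientGroup.mk (a : G) = QuotientGroup.mk (b : G) at hq
    rw [QuotientGroup.eq] at hq
    exact Quotient.sound' (QuotientGroup.leftRel_apply.mpr (by simpa [mem_subgroupOf] using hq))
  have hrange : Set.range f = (A : Set G).image ((↑) : G → G ⧸ B) := by
    ext q
    constructor
    · rintro ⟨q', rfl⟩
      obtain ⟨a, rfl⟩ := Quotient.exists_rep q'
      exact ⟨(a : G), a.2, rfl⟩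
    · rintro ⟨g, hg, rfl⟩
      exact ⟨QuotientGroup.mk (⟨g, hg⟩ : A), rfl⟩
  have h1 : Nat.card ((A : Set G).image ((↑) : G → G ⧸ B) : Set (G ⧸ B)) =
      Nat.card (A ⧸ B.subgroupOf A) := by
    rw [← hrange, Nat.card_range_of_injective hinj]
  rw [h1, ← st2_card_subgroupOf A B, ← Subgroup.card_eq_card_quotient_mul_card_subgroup]

lemma st2_card_mul_inf [Finite G] (A B : Subgroup G) :
    Nat.card ((A : Set G) * (B : Set G) : Set G) * Nat.card (A ⊓ B : Subgroup G) =
      Nat.card A * Nat.card B := by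
  rw [Subgroup.card_mul_eq_card_subgroup_mul_card_quotient B (A : Set G)]
  rw [mul_comm (Nat.card B), mul_assoc, mul_comm (Nat.card B), ← mul_assoc,
    st2_card_image_quotient A B]

lemma st2_card_eq_mul_relindex [Finite G] {A S : Subgroup G} (h : A ≤ S) :
    Nat.card S = A.relIndex S * Nat.card A := by
  have h1 := Subgroup.card_mul_index (A.subgroupOf S)
  rw [← h1, st2_card_subgroupOf, inf_of_le_right h, Subgroup.relIndex, mul_comm]

end St2Aux

/-- If `H`, `K`, `N` are pairwise permutable subgroups of a finite group `G` and
`H` is a Hall subgroup of `G`, then `N ∩ HK = (N ∩ H)(N ∩ K)`. -/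
theorem statement_2 {G : Type*} [Group G] [Finite G] (H K N : Subgroup G)
    (hHall : Nat.Coprime (Nat.card H) H.index)
    (hHK : Permutes H K) (hHN : Permutes H N) (hKN : Permutes K N) :
    (N : Set G) ∩ ((H : Set G) * (K : Set G)) =
      ((N ⊓ H : Subgroup G) : Set G) * ((N ⊓ K : Subgroup G) : Set G) := by
  classical
  set HK : Subgroup G := st2_mulSubgroup H K hHK with hHKdef
  set HN : Subgroup G := st2_mulSubgroup H N hHN with hHNdef
  set KN : Subgroup G := st2_mulSubgroup K N hKN with hKNdef
  have hH_HK : H ≤ HK := fun g hg => ⟨g, hg, 1, K.one_mem, mul_one g⟩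
  have hK_HK : K ≤ HK := fun g hg => ⟨1, H.one_mem, g, hg, one_mul g⟩
  have hH_HN : H ≤ HN := fun g hg => ⟨g, hg, 1, N.one_mem, mul_one g⟩
  have hK_KN : K ≤ KN := fun g hg => ⟨g, hg, 1, N.one_mem, mul_one g⟩
  set D : Subgroup G := N ⊓ HK with hDdef
  set S : Subgroup G := HN ⊓ HK with hSdef
  set T : Subgroup G := KN ⊓ HK with hTdef
  set P : Subgroup G := N ⊓ H with hPdef
  set Q : Subgroup G := N ⊓ K with hQdef
  -- (a) S = H * D as sets
  have hScoe : (S : Set G) = (H : Set G) * (D : Set G) := by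
    ext s
    constructor
    · intro hs
      have hsHN : s ∈ (H : Set G) * (N : Set G) := (Subgroup.mem_inf.mp hs).1
      have hsHK : s ∈ HK := (Subgroup.mem_inf.mp hs).2
      obtain ⟨h, hh, n, hn, rfl⟩ := hsHN
      have hnHK : n ∈ HK := by
        have := HK.mul_mem (HK.inv_mem (hH_HK hh)) hsHK
        simpa using this
      exact Set.mul_mem_mul hh (Subgroup.mem_inf.mpr ⟨hn, hnHK⟩)
    · rintro ⟨h, hh, d, hd, rfl⟩
      have hdD : d ∈ D := hd
      obtain ⟨hdN, hdHK⟩ := Subgroup.mem_inf.mp hdD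
      exact Subgroup.mem_inf.mpr ⟨Set.mul_mem_mul hh hdN, HK.mul_mem (hH_HK hh) hdHK⟩
  -- (b) T = K * D as sets
  have hTcoe : (T : Set G) = (K : Set G) * (D : Set G) := by
    ext t
    constructor
    · intro ht
      have htKN : t ∈ (K : Set G) * (N : Set G) := (Subgroup.mem_inf.mp ht).1
      have htHK : t ∈ HK := (Subgroup.mem_inf.mp ht).2
      obtain ⟨k, hk, n, hn, rfl⟩ := htKN
      have hnHK : n ∈ HK := by
        have := HK.mul_mem (HK.inv_mem (hK_HK hk)) htHK
        simpa using this
      exact Set.mul_mem_mul hk (Subgroup.mem_inf.mpr ⟨hn, hnHK⟩)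
    · rintro ⟨k, hk, d, hd, rfl⟩
      have hdD : d ∈ D := hd
      obtain ⟨hdN, hdHK⟩ := Subgroup.mem_inf.mp hdD
      exact Subgroup.mem_inf.mpr ⟨Set.mul_mem_mul hk hdN, HK.mul_mem (hK_HK hk) hdHK⟩
  -- (c) T = K * (H ⊓ KN) as sets
  have hTcoe2 : (T : Set G) = (K : Set G) * ((H ⊓ KN : Subgroup G) : Set G) := by
    ext t
    constructor
    · intro ht
      have htKN : t ∈ KN := (Subgroup.mem_inf.mp ht).1
      have htHK : t ∈ (H : Set G) * (K : Set G) := (Subgroup.mem_inf.mp ht).2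
      rw [hHK] at htHK
      obtain ⟨k, hk, h, hh, rfl⟩ := htHK
      have hhKN : h ∈ KN := by
        have := KN.mul_mem (KN.inv_mem (hK_KN hk)) htKN
        simpa using this
      exact Set.mul_mem_mul hk (Subgroup.mem_inf.mpr ⟨hh, hhKN⟩)
    · rintro ⟨k, hk, h, hh, rfl⟩
      obtain ⟨hhH, hhKN⟩ := Subgroup.mem_inf.mp hh
      have h1 : k * h ∈ KN := KN.mul_mem (hK_KN hk) hhKN
      have h2 : k * h ∈ HK := by
        show k * h ∈ (H : Set G) * (K : Set G)
        rw [hHK]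
        exact Set.mul_mem_mul hk hhH
      exact Subgroup.mem_inf.mpr ⟨h1, h2⟩
  have cardpos : ∀ (X : Subgroup G), 0 < Nat.card X := fun X => Nat.card_pos
  -- u
  have hHS : H ≤ S := le_inf hH_HN hH_HK
  set u := H.relIndex S with hudef
  have hu1 : Nat.card S = u * Nat.card H := st2_card_eq_mul_relindex hHS
  have hu2 : u ∣ H.index := Subgroup.relIndex_dvd_index_of_le hHS
  have hHD : H ⊓ D = P := by
    ext g
    simp only [hDdef, hPdef, Subgroup.mem_inf]
    exact ⟨fun ⟨h1, h2, _⟩ => ⟨h2, h1⟩, fun ⟨h1, h2⟩ => ⟨h2, h1, hH_HK h2⟩⟩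
  have hcardS : Nat.card S = Nat.card ((H : Set G) * (D : Set G) : Set G) :=
    Nat.card_congr (Equiv.setCongr hScoe)
  have hud : u * Nat.card P = Nat.card D := by
    have h1 := st2_card_mul_inf H D
    rw [← hcardS, hu1, hHD] at h1
    have h2 : Nat.card H * (u * Nat.card P) = Nat.card H * Nat.card D := by
      rw [← h1]; ring
    exact Nat.eq_of_mul_eq_mul_left (cardpos H) h2
  -- v
  have hKT : K ≤ T := le_inf hK_KN hK_HK
  set v := K.relIndex T with hvdef
  have hv1 : Nat.card T = v * Nat.card K := st2_card_eq_mul_relindex hKT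
  have hKD : K ⊓ D = Q := by
    ext g
    simp only [hDdef, hQdef, Subgroup.mem_inf]
    exact ⟨fun ⟨h1, h2, _⟩ => ⟨h2, h1⟩, fun ⟨h1, h2⟩ => ⟨h2, h1, hK_HK h2⟩⟩
  have hcardT : Nat.card T = Nat.card ((K : Set G) * (D : Set G) : Set G) :=
    Nat.card_congr (Equiv.setCongr hTcoe)
  have hvd : v * Nat.card Q = Nat.card D := by
    have h1 := st2_card_mul_inf K D
    rw [← hcardT, hv1, hKD] at h1
    have h2 : Nat.card K * (v * Nat.card Q) = Nat.card K * Nat.card D := by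
      rw [← h1]; ring
    exact Nat.eq_of_mul_eq_mul_left (cardpos K) h2
  -- v divides card H
  have hvH : v ∣ Nat.card H := by
    have hcardT2 : Nat.card T = Nat.card ((K : Set G) * ((H ⊓ KN : Subgroup G) : Set G) : Set G) :=
      Nat.card_congr (Equiv.setCongr hTcoe2)
    have h1 := st2_card_mul_inf K (H ⊓ KN)
    rw [← hcardT2, hv1] at h1
    have hKHKN : K ⊓ (H ⊓ KN) = K ⊓ H := by
      ext g
      simp only [Subgroup.mem_inf]
      exact ⟨fun ⟨h1, h2, _⟩ => ⟨h1, h2⟩, fun ⟨h1, h2⟩ => ⟨h1, h2, hK_KN h1⟩⟩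
    rw [hKHKN] at h1
    have h2 : Nat.card K * (v * Nat.card (K ⊓ H : Subgroup G)) =
        Nat.card K * Nat.card (H ⊓ KN : Subgroup G) := by rw [← h1]; ring
    have h3 := Nat.eq_of_mul_eq_mul_left (cardpos K) h2
    exact dvd_trans ⟨Nat.card (K ⊓ H : Subgroup G), h3.symm⟩
      (Subgroup.card_dvd_of_le inf_le_left)
  -- coprimality
  have hcop : Nat.Coprime u v :=
    ((hHall.coprime_dvd_right hu2).coprime_dvd_left hvH).symm
  -- arithmetic
  set a := Nat.card P with hadef
  set b := Nat.card Q with hbdef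
  set c := Nat.card (P ⊓ Q : Subgroup G) with hcdef
  set d := Nat.card D with hddef
  have hub : u ∣ b := by
    have h1 : u ∣ v * b := by rw [hvd]; exact Dvd.intro _ hud
    exact (Nat.Coprime.dvd_of_dvd_mul_left hcop h1)
  obtain ⟨b', hb'⟩ := hub
  have hbpos : 0 < b := cardpos Q
  have hupos : 0 < u := Nat.pos_of_ne_zero fun h => by
    rw [h, zero_mul] at hud; exact (cardpos D).ne' hud.symm
  have hb'pos : 0 < b' := by
    rcases Nat.eq_zero_or_pos b' with h | h
    · exfalso; rw [h, mul_zero] at hb'; exact hbpos.ne' hb'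
    · exact h
  have hab' : a = v * b' := by
    have h1 : u * a = u * (v * b') := by
      rw [hud, ← hvd, hb']; ring
    exact Nat.eq_of_mul_eq_mul_left hupos h1
  have hca : c ∣ a := Subgroup.card_dvd_of_le inf_le_left
  have hcb : c ∣ b := Subgroup.card_dvd_of_le inf_le_right
  have hcb' : c ∣ b' := by
    have h1 : c ∣ Nat.gcd a b := Nat.dvd_gcd hca hcb
    have h2 : Nat.gcd a b = b' := by
      rw [hab', hb', Nat.gcd_mul_right, Nat.Coprime.gcd_eq_one, one_mul]
      exact hcop.symm
    rwa [h2] at h1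
  obtain ⟨c', hc'⟩ := hcb'
  have hc'pos : 0 < c' := by
    rcases Nat.eq_zero_or_pos c' with h | h
    · exfalso; rw [h, mul_zero] at hc'; exact hb'pos.ne' hc'
    · exact h
  -- the product set P * Q
  have hPQsub : ((P : Set G) * (Q : Set G) : Set G) ⊆ (D : Set G) := by
    rintro x ⟨p, hp, q, hq, rfl⟩
    obtain ⟨hpN, hpH⟩ := Subgroup.mem_inf.mp (show p ∈ P from hp)
    obtain ⟨hqN, hqK⟩ := Subgroup.mem_inf.mp (show q ∈ Q from hq)
    exact Subgroup.mem_inf.mpr ⟨N.mul_mem hpN hqN, HK.mul_mem (hH_HK hpH) (hK_HK hqK)⟩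
  have hPQcard : Nat.card ((P : Set G) * (Q : Set G) : Set G) = d * c' := by
    have h1 := st2_card_mul_inf P Q
    have h2 : a * b = d * c' * c := by
      rw [← hud, hab', hb', hc']; ring
    rw [h2] at h1
    have hcpos : 0 < c := cardpos _
    exact Nat.eq_of_mul_eq_mul_right hcpos h1
  have hDle : Nat.card (D : Set G) ≤ Nat.card ((P : Set G) * (Q : Set G) : Set G) := by
    have : Nat.card (D : Set G) = d := rfl
    rw [this, hPQcard]
    calc d = d * 1 := (mul_one d).symm
    _ ≤ d * c' := Nat.mul_le_mul_left d hc'pos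
  have hfin : ((D : Set G)).Finite := Set.toFinite _
  have hPQeq : ((P : Set G) * (Q : Set G) : Set G) = (D : Set G) := by
    apply Set.eq_of_subset_of_ncard_le hPQsub _ hfin
    rw [← Nat.card_coe_set_eq, ← Nat.card_coe_set_eq]
    exact hDle
  have hDcoe : (D : Set G) = (N : Set G) ∩ ((H : Set G) * (K : Set G)) := by
    rw [hDdef, Subgroup.coe_inf]; rfl
  rw [← hDcoe, ← hPQeq]
end

section
/- Let σ be a partition of the primes, G a finite group, and A a σ-subnormal subgroup of G with A a σ_i-group for some block σ_i of σ. Then A ≤ O_{σ_i}(G), the largest normal σ_i-subgroup of G. -/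
open Subgroup
open scoped Pointwise

section Aux

namespace SigmaAux

variable {ι : Type*} (σ : ι → Set ℕ) (i : ι)

theorem sigma_dvd {n m : ℕ} (h : IsSigmaNumber σ i n) (hd : m ∣ n) :
    IsSigmaNumber σ i m := fun p hp hpd => h p hp (hpd.trans hd)

theorem sigma_mul {n m : ℕ} (h : IsSigmaNumber σ i n) (h' : IsSigmaNumber σ i m) :
    IsSigmaNumber σ i (n * m) := fun p hp hpd =>
  ((Nat.Prime.dvd_mul hp).mp hpd).elim (h p hp) (h' p hp)

variable {G : Type*} [Group G]

/-- conjugation stability of `N` under `B` -/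
def CStab (B N : Subgroup G) : Prop := ∀ b ∈ B, ∀ n ∈ N, b * n * b⁻¹ ∈ N

theorem cstab_self (B : Subgroup G) : CStab B B :=
  fun b hb n hn => mul_mem (mul_mem hb hn) (inv_mem hb)

/-- the collection of conjugation-stable σ_i-subgroups of B -/
def S (B : Subgroup G) : Set (Subgroup G) :=
  {N | N ≤ B ∧ CStab B N ∧ IsSigmaNumber σ i (Nat.card N)}

/-- the σ_i-core of `B`, as a subgroup of the ambient group -/
def oCore (B : Subgroup G) : Subgroup G := sSup (S σ i B)

theorem le_oCore {B N : Subgroup G} (h : N ∈ S σ i B) : N ≤ oCore σ i B := le_sSup h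

theorem oCore_le (B : Subgroup G) : oCore σ i B ≤ B := sSup_le fun _ hN => hN.1

theorem bot_mem_S (B : Subgroup G) : ⊥ ∈ S σ i B := by
  refine ⟨bot_le, fun b hb n hn => ?_, ?_⟩
  · simp only [Subgroup.mem_bot] at hn ⊢; simp [hn]
  · rw [Subgroup.card_bot]; intro p hp hpd
    exact absurd (Nat.eq_one_of_dvd_one hpd) hp.ne_one

theorem card_dvd_of_surj {H : Type*} [Group H] [Finite G] (f : G →* H)
    (hf : Function.Surjective f) : Nat.card H ∣ Nat.card G := by
  rw [Nat.card_congr (QuotientGroup.quotientKerEquivOfSurjective f hf).toEquiv.symm]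
  exact Subgroup.card_quotient_dvd_card _

theorem card_map_dvd {H : Type*} [Group H] [Finite G] (f : G →* H) (M : Subgroup G) :
    Nat.card (M.map f) ∣ Nat.card M := by
  have hr : (f.comp M.subtype).range = M.map f := by
    ext x; simp [MonoidHom.mem_range, Subgroup.mem_map, Subtype.exists]
  rw [← hr, Nat.card_congr (QuotientGroup.quotientKerEquivRange (f.comp M.subtype)).toEquiv.symm]
  exact Subgroup.card_quotient_dvd_card _

theorem card_comap_ker_le {H : Type*} [Group H] [Finite G] (f : G →* H) (M : Subgroup G)
    (h : f.ker ≤ M) : Nat.card M = Nat.card (M.map f) * Nat.card f.ker := by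
  have hker : (f.comp M.subtype).ker = f.ker.subgroupOf M := by
    ext x; simp [MonoidHom.mem_ker, Subgroup.mem_subgroupOf]
  have hr : (f.comp M.subtype).range = M.map f := by
    ext x; simp [MonoidHom.mem_range, Subgroup.mem_map, Subtype.exists]
  rw [Subgroup.card_eq_card_quotient_mul_card_subgroup (f.ker.subgroupOf M)]
  congr 1
  · rw [← hker, Nat.card_congr (QuotientGroup.quotientKerEquivRange (f.comp M.subtype)).toEquiv,
      hr]
  · exact Nat.card_congr (Subgroup.subgroupOfEquivOfLe h).toEquiv

theorem sup_mem_S [Finite G] {B N₁ N₂ : Subgroup G} (h₁ : N₁ ∈ S σ i B) (h₂ : N₂ ∈ S σ i B) :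
    N₁ ⊔ N₂ ∈ S σ i B := by
  obtain ⟨hle₁, hst₁, hcard₁⟩ := h₁
  obtain ⟨hle₂, hst₂, hcard₂⟩ := h₂
  have hJB : N₁ ⊔ N₂ ≤ B := sup_le hle₁ hle₂
  set J := N₁ ⊔ N₂ with hJ
  have hstab : CStab B J := by
    intro b hb
    have hcm : J ≤ J.comap (MulAut.conj b).toMonoidHom := by
      rw [hJ]
      refine sup_le (fun n hn => ?_) (fun n hn => ?_)
      · simp only [Subgroup.mem_comap, MulEquiv.coe_toMonoidHom, MulAut.conj_apply]
        exact (le_sup_left : N₁ ≤ N₁ ⊔ N₂) (hst₁ b hb n hn)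
      · simp only [Subgroup.mem_comap, MulEquiv.coe_toMonoidHom, MulAut.conj_apply]
        exact (le_sup_right : N₂ ≤ N₁ ⊔ N₂) (hst₂ b hb n hn)
    intro n hn
    have := hcm hn
    simpa [MulAut.conj_apply] using this
  refine ⟨hJB, hstab, ?_⟩
  have hN₂J : N₂ ≤ J := le_sup_right
  have hnormal : (N₂.subgroupOf J).Normal := by
    constructor
    intro n hn g
    simp only [Subgroup.mem_subgroupOf] at hn ⊢
    exact hst₂ (g : G) (hJB g.2) (n : G) hn
  have hcardJ := Subgroup.card_eq_card_quotient_mul_card_subgroup (N₂.subgroupOf J)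
  have hcard2' : Nat.card (N₂.subgroupOf J) = Nat.card N₂ :=
    Nat.card_congr (Subgroup.subgroupOfEquivOfLe hN₂J).toEquiv
  have hquot : Nat.card (↥J ⧸ N₂.subgroupOf J) ∣ Nat.card N₁ := by
    set ψ := (QuotientGroup.mk' (N₂.subgroupOf J)).comp
      (Subgroup.inclusion (le_sup_left : N₁ ≤ J)) with hψ
    have hsurj : Function.Surjective ψ := by
      have hcomap : (⊤ : Subgroup ↥J) ≤ ψ.range.comap (QuotientGroup.mk' (N₂.subgroupOf J)) := by
        have htop : (N₁.subgroupOf J) ⊔ (N₂.subgroupOf J) = ⊤ := by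
          apply Subgroup.map_injective (Subgroup.subtype_injective J)
          rw [Subgroup.map_sup, Subgroup.subgroupOf_map_subtype, Subgroup.subgroupOf_map_subtype]
          have hmt : Subgroup.map J.subtype ⊤ = J := by
            rw [← MonoidHom.range_eq_map, Subgroup.range_subtype]
          rw [hmt, inf_eq_left.mpr (le_sup_left : N₁ ≤ J),
            inf_eq_left.mpr (le_sup_right : N₂ ≤ J)]
        rw [← htop]
        refine sup_le (fun x hx => ?_) (fun x hx => ?_)
        · simp only [Subgroup.mem_comap]
          exact ⟨⟨(x : ↥J), hx⟩, rfl⟩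
        · simp only [Subgroup.mem_comap]
          have h1 : QuotientGroup.mk' (N₂.subgroupOf J) x = 1 := by
            rw [← MonoidHom.mem_ker, QuotientGroup.ker_mk']; exact hx
          rw [h1]; exact one_mem _
      intro q
      obtain ⟨x, rfl⟩ := QuotientGroup.mk'_surjective (N₂.subgroupOf J) q
      exact hcomap (Subgroup.mem_top x)
    exact card_dvd_of_surj ψ hsurj
  intro p hp hpd
  rw [hcardJ] at hpd
  rcases (Nat.Prime.dvd_mul hp).mp hpd with h | h
  · exact hcard₁ p hp (h.trans hquot)
  · rw [hcard2'] at h; exact hcard₂ p hp h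

theorem directedOn_S [Finite G] (B : Subgroup G) : DirectedOn (· ≤ ·) (S σ i B) :=
  fun N₁ h₁ N₂ h₂ => ⟨N₁ ⊔ N₂, sup_mem_S σ i h₁ h₂, le_sup_left, le_sup_right⟩

theorem card_oCore [Finite G] (B : Subgroup G) : IsSigmaNumber σ i (Nat.card (oCore σ i B)) := by
  intro p hp hpd
  haveI : Fact p.Prime := ⟨hp⟩
  haveI : Fintype (oCore σ i B) := Fintype.ofFinite _
  rw [Nat.card_eq_fintype_card] at hpd
  obtain ⟨x, hx⟩ := exists_prime_orderOf_dvd_card p hpd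
  have hx' : (x : G) ∈ sSup (S σ i B) := x.2
  rw [Subgroup.mem_sSup_of_directedOn ⟨⊥, bot_mem_S σ i B⟩ (directedOn_S σ i B)] at hx'
  obtain ⟨N, hNS, hxN⟩ := hx'
  have horder : orderOf ((x : G)) = p := by
    rw [← hx, ← orderOf_injective (oCore σ i B).subtype (Subgroup.subtype_injective _) x]
    rfl
  exact hNS.2.2 p hp (horder ▸ Subgroup.orderOf_dvd_natCard N hxN)

theorem conj_mem_S {B N : Subgroup G} (g : G) (hg : ∀ x : G, x ∈ B ↔ g * x * g⁻¹ ∈ B)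
    (hN : N ∈ S σ i B) : N.map (MulAut.conj g).toMonoidHom ∈ S σ i B := by
  obtain ⟨hle, hst, hcard⟩ := hN
  have hmem : ∀ y : G, y ∈ N.map (MulAut.conj g).toMonoidHom ↔ g⁻¹ * y * g ∈ N := by
    intro y
    simp only [Subgroup.mem_map, MulEquiv.coe_toMonoidHom, MulAut.conj_apply]
    constructor
    · rintro ⟨x, hx, rfl⟩; group; simpa using hx
    · intro h; exact ⟨g⁻¹ * y * g, h, by group⟩
  refine ⟨fun y hy => ?_, fun b hb y hy => ?_, ?_⟩
  · rw [hmem] at hy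
    have := (hg (g⁻¹ * y * g)).mp (hle hy)
    group at this; simpa using this
  · rw [hmem] at hy ⊢
    have hb' : g⁻¹ * b * g ∈ B := by
      apply (hg (g⁻¹ * b * g)).mpr
      group; simpa using hb
    have hc := hst _ hb' _ hy
    have heq : (g⁻¹ * b * g) * (g⁻¹ * y * g) * (g⁻¹ * b * g)⁻¹ = g⁻¹ * (b * y * b⁻¹) * g := by
      group
    rwa [heq] at hc
  · rwa [Nat.card_congr (Subgroup.equivMapOfInjective N _
      (MulAut.conj g).injective).toEquiv.symm]

theorem oCore_conj {B : Subgroup G} (g : G) (hg : ∀ x : G, x ∈ B ↔ g * x * g⁻¹ ∈ B) :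
    ∀ n ∈ oCore σ i B, g * n * g⁻¹ ∈ oCore σ i B := by
  have h : oCore σ i B ≤ (oCore σ i B).comap (MulAut.conj g).toMonoidHom := by
    refine sSup_le fun N hN => fun x hx => ?_
    simp only [Subgroup.mem_comap, MulEquiv.coe_toMonoidHom, MulAut.conj_apply]
    exact le_oCore σ i (conj_mem_S σ i g hg hN) ⟨x, hx, rfl⟩
  intro n hn
  simpa [MulAut.conj_apply] using h hn

theorem cstab_oCore {B Y : Subgroup G} (hst : CStab Y B) : CStab Y (oCore σ i B) := by
  intro y hy
  refine oCore_conj σ i y (fun x => ⟨fun hx => hst y hy x hx, fun hx => ?_⟩)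
  have := hst y⁻¹ (inv_mem hy) _ hx
  group at this; simpa using this

theorem oCore_mem_S {B Y : Subgroup G} [Finite G]
    (hBY : B ≤ Y) (hst : CStab Y B) : oCore σ i B ∈ S σ i Y :=
  ⟨(oCore_le σ i B).trans hBY, cstab_oCore σ i hst, card_oCore σ i B⟩

theorem cstab_of_subgroupOf_normal {X Y : Subgroup G} (hXY : X ≤ Y)
    (h : (X.subgroupOf Y).Normal) : CStab Y X := by
  intro y hy x hx
  have := h.conj_mem ⟨x, hXY hx⟩ (by simpa [Subgroup.mem_subgroupOf] using hx) ⟨y, hy⟩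
  simpa [Subgroup.mem_subgroupOf] using this

end SigmaAux

end Aux

namespace SigmaAux

variable {ι : Type*} (σ : ι → Set ℕ) (i : ι) {G : Type*} [Group G]

set_option maxHeartbeats 1000000 in
theorem step_primary [Finite G] {X Y : Subgroup G} (hXY : X ≤ Y) {j : ι}
    (hu : ∀ p : ℕ, p.Prime → p ∈ σ i → p ∈ σ j → i = j)
    (hQ : IsSigmaNumber σ j (Nat.card (↥Y ⧸ (X.subgroupOf Y).normalCore))) :
    oCore σ i X ≤ oCore σ i Y := by
  set NC := (X.subgroupOf Y).normalCore with hNCdef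
  haveI hNCn : NC.Normal := Subgroup.normalCore_normal _
  set K := NC.map Y.subtype with hKdef
  have hNCK : K.subgroupOf Y = NC := by
    rw [hKdef]
    exact Subgroup.comap_map_eq_self_of_injective (Subgroup.subtype_injective Y) NC
  have hKX : K ≤ X := by
    rintro x ⟨nc, hnc, rfl⟩
    have := Subgroup.normalCore_le (X.subgroupOf Y) hnc
    rwa [Subgroup.mem_subgroupOf] at this
  have hKY : K ≤ Y := Subgroup.map_subtype_le _
  have hKst : CStab Y K := by
    rintro y hy x ⟨nc, hnc, rfl⟩
    refine ⟨⟨y, hy⟩ * nc * ⟨y, hy⟩⁻¹, hNCn.conj_mem nc hnc ⟨y, hy⟩, rfl⟩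
  -- the σ_i-cores
  set T := oCore σ i K with hTdef
  have hTK : T ≤ K := oCore_le σ i K
  have hTσ : IsSigmaNumber σ i (Nat.card T) := card_oCore σ i K
  have hTst : CStab Y T := cstab_oCore σ i hKst
  have hTY : T ≤ Y := hTK.trans hKY
  have hT_oY : T ≤ oCore σ i Y := le_oCore σ i ⟨hTY, hTst, hTσ⟩
  set D := oCore σ i X with hDdef
  have hDX : D ≤ X := oCore_le σ i X
  have hDσ : IsSigmaNumber σ i (Nat.card D) := card_oCore σ i X
  have hDst : CStab X D := cstab_oCore σ i (cstab_self X)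
  have hDY : D ≤ Y := hDX.trans hXY
  have hTD : T ≤ D :=
    le_oCore σ i ⟨hTK.trans hKX, fun b hb n hn => hTst b (hXY hb) n hn, hTσ⟩
  have hDKT : D ⊓ K ≤ T := by
    refine le_oCore σ i ⟨inf_le_right, fun k hk n hn => ?_, ?_⟩
    · exact ⟨hDst k (hKX hk) n hn.1, hKst k (hKY hk) n hn.2⟩
    · exact sigma_dvd σ i hDσ (Subgroup.card_dvd_of_le inf_le_left)
  have hcomm : ∀ d ∈ D, ∀ k ∈ K, d * k * d⁻¹ * k⁻¹ ∈ T := by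
    intro d hd k hk
    refine hDKT ⟨?_, ?_⟩
    · have h1 : k * d⁻¹ * k⁻¹ ∈ D := hDst k (hKX hk) d⁻¹ (D.inv_mem hd)
      have h2 : d * (k * d⁻¹ * k⁻¹) ∈ D := mul_mem hd h1
      have heq : d * (k * d⁻¹ * k⁻¹) = d * k * d⁻¹ * k⁻¹ := by group
      rwa [heq] at h2
    · exact mul_mem (hKst d (hXY (hDX hd)) k hk) (K.inv_mem hk)
  -- the quotient by T
  set T' := T.subgroupOf Y with hT'def
  haveI hT'N : T'.Normal := by
    constructor
    intro n hn g
    simp only [hT'def, Subgroup.mem_subgroupOf] at hn ⊢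
    exact hTst g g.2 n hn
  set π := QuotientGroup.mk' T' with hπdef
  have hπs : Function.Surjective π := QuotientGroup.mk'_surjective T'
  have hπker : π.ker = T' := QuotientGroup.ker_mk' T'
  set Kb := NC.map π with hKbdef
  haveI hKbN : Kb.Normal := Subgroup.Normal.map hNCn π hπs
  set Db := (D.subgroupOf Y).map π with hDbdef
  set C := Subgroup.centralizer (Kb : Set (↥Y ⧸ T')) with hCdef
  have hDbC : Db ≤ C := by
    rintro x ⟨d', hd', rfl⟩
    rw [hCdef, Subgroup.mem_centralizer_iff]
    intro kb hkb
    simp only [SetLike.mem_coe] at hkb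
    obtain ⟨k', hk', rfl⟩ := hkb
    have hd2 : (d' : G) ∈ D := hd'
    have hk'K : (k' : G) ∈ K := ⟨k', hk', rfl⟩
    have hT1 : ((k' * d')⁻¹ * (d' * k') : ↥Y) ∈ T' := by
      have h0 := hcomm (d' : G)⁻¹ (D.inv_mem hd2) (k' : G)⁻¹ (K.inv_mem hk'K)
      rw [hT'def, Subgroup.mem_subgroupOf]
      have heq : (((k' * d')⁻¹ * (d' * k') : ↥Y) : G)
          = (d' : G)⁻¹ * (k' : G)⁻¹ * ((d' : G)⁻¹)⁻¹ * ((k' : G)⁻¹)⁻¹ := by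
        push_cast; group
      rw [heq]
      exact h0
    have : π (k' * d') = π (d' * k') := by
      have := (QuotientGroup.eq (s := T') (a := k' * d') (b := d' * k')).mpr hT1
      simpa [hπdef, QuotientGroup.mk'_apply] using this
    simpa [map_mul] using this
  haveI hCN : C.Normal := by
    constructor
    intro c hc g
    rw [hCdef, Subgroup.mem_centralizer_iff] at hc ⊢
    intro k hk
    have hk' : g⁻¹ * k * g ∈ Kb := by
      have := hKbN.conj_mem k hk g⁻¹
      simpa using this
    have hcomm' := hc _ hk'
    have : g * (g⁻¹ * k * g * c) * g⁻¹ = g * (c * (g⁻¹ * k * g)) * g⁻¹ := by rw [hcomm']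
    calc k * (g * c * g⁻¹) = g * (g⁻¹ * k * g * c) * g⁻¹ := by group
    _ = g * (c * (g⁻¹ * k * g)) * g⁻¹ := this
    _ = (g * c * g⁻¹) * k := by group
  set Z := C ⊓ Kb with hZdef
  have hZcen : ∀ z ∈ Z, ∀ c ∈ C, z * c = c * z := by
    intro z hz c hc
    rw [hCdef, Subgroup.mem_centralizer_iff] at hc
    exact hc z hz.2
  -- Z has no σ_i-part
  have hZσ' : ∀ p : ℕ, p.Prime → p ∈ σ i → ¬ p ∣ Nat.card Z := by
    intro p hp hpi hpd
    haveI : Fact p.Prime := ⟨hp⟩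
    haveI : Fintype Z := Fintype.ofFinite _
    rw [Nat.card_eq_fintype_card] at hpd
    obtain ⟨ζ, hζ⟩ := exists_prime_orderOf_dvd_card p hpd
    have hz : (ζ : ↥Y ⧸ T') ∈ Z := ζ.2
    have horder : orderOf ((ζ : ↥Y ⧸ T')) = p := by
      rw [← hζ, ← orderOf_injective Z.subtype (Subgroup.subtype_injective _) ζ]; rfl
    set P := Subgroup.zpowers ((ζ : ↥Y ⧸ T')) with hPdef
    set M := P.comap π ⊓ K.subgroupOf Y with hMdef
    have hTM : π.ker ≤ M := by
      rw [hπker]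
      refine le_inf (fun t ht => ?_) (fun t ht => ?_)
      · have ht1 : π t = 1 := by rw [← MonoidHom.mem_ker, hπker]; exact ht
        show π t ∈ P
        rw [ht1]; exact one_mem _
      · exact hTK ht
    have hMcard := card_comap_ker_le π M hTM
    have hMπP : M.map π ≤ P := (Subgroup.map_mono inf_le_left).trans (Subgroup.map_comap_le π P)
    have hMσ : IsSigmaNumber σ i (Nat.card M) := by
      intro q hq hqd
      rw [hMcard] at hqd
      rcases (Nat.Prime.dvd_mul hq).mp hqd with h | h
      · have hdvd : Nat.card (M.map π) ∣ p := by
          have := Subgroup.card_dvd_of_le hMπP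
          rwa [hPdef, Nat.card_zpowers, horder] at this
        have : q ∣ p := h.trans hdvd
        rwa [(Nat.prime_dvd_prime_iff_eq hq hp).mp this]
      · rw [hπker] at h
        have hcT' : Nat.card T' = Nat.card T :=
          Nat.card_congr (Subgroup.subgroupOfEquivOfLe hTY).toEquiv
        rw [hcT'] at h
        exact hTσ q hq h
    have hP2 : M.map Y.subtype ∈ S σ i K := by
      refine ⟨?_, ?_, ?_⟩
      · rintro x ⟨x', hx', rfl⟩
        exact hx'.2
      · rintro k hk x ⟨x', hx', rfl⟩
        have hyk : (⟨k, hKY hk⟩ : ↥Y) ∈ NC := by rw [← hNCK]; exact hk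
        refine ⟨⟨k, hKY hk⟩ * x' * ⟨k, hKY hk⟩⁻¹, ⟨?_, ?_⟩, rfl⟩
        · show π (⟨k, hKY hk⟩ * x' * ⟨k, hKY hk⟩⁻¹) ∈ P
          rw [map_mul, map_mul, map_inv]
          have hπyk : π ⟨k, hKY hk⟩ ∈ Kb := ⟨_, hyk, rfl⟩
          have hcm : Commute (π ⟨k, hKY hk⟩) ((ζ : ↥Y ⧸ T')) := by
            have hc0 : ((ζ : ↥Y ⧸ T')) ∈ C := hz.1
            rw [hCdef, Subgroup.mem_centralizer_iff] at hc0
            exact hc0 _ hπyk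
          obtain ⟨m, hm⟩ := (Subgroup.mem_zpowers_iff).mp hx'.1
          have : π ⟨k, hKY hk⟩ * π x' * (π ⟨k, hKY hk⟩)⁻¹ = π x' := by
            rw [← hm]
            have := (hcm.zpow_right m).eq
            rw [this, mul_inv_cancel_right]
          rw [this]
          exact hx'.1
        · have h2 : (x' : G) ∈ K := hx'.2
          exact hKst k (hKY hk) _ h2
      · rwa [Nat.card_congr (Subgroup.equivMapOfInjective M _
          (Subgroup.subtype_injective Y)).toEquiv.symm]
    have hP2T : M.map Y.subtype ≤ T := le_oCore σ i hP2
    obtain ⟨nc, hnc, hncz⟩ := hz.2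
    have hncM : nc ∈ M := by
      refine ⟨?_, ?_⟩
      · show π nc ∈ P
        rw [hncz]
        exact Subgroup.mem_zpowers _
      · show nc ∈ K.subgroupOf Y
        rw [hNCK]; exact hnc
    have : (nc : G) ∈ T := hP2T ⟨nc, hncM, rfl⟩
    have hnT' : nc ∈ T' := by rw [hT'def, Subgroup.mem_subgroupOf]; exact this
    have : π nc = 1 := by rw [← MonoidHom.mem_ker, hπker]; exact hnT'
    rw [this] at hncz
    rw [← hncz, orderOf_one] at horder
    exact hp.ne_one horder.symm
  -- second isomorphism data
  have hZC : Z ≤ C := inf_le_left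
  set Z' := Z.subgroupOf C with hZ'def
  haveI hZ'N : Z'.Normal := by
    constructor
    intro n hn g
    have h := hZcen ((n : ↥C) : ↥Y ⧸ T') hn ((g : ↥C) : ↥Y ⧸ T') g.2
    have heq : (g * n * g⁻¹ : ↥C) = n := by
      apply Subtype.ext
      push_cast
      rw [← h]
      group
    rw [heq]; exact hn
  set χ := (QuotientGroup.mk' Kb).comp C.subtype with hχdef
  have hχker : χ.ker = Z' := by
    ext x
    have h1 : x ∈ χ.ker ↔ (x : ↥Y ⧸ T') ∈ Kb := by
      rw [MonoidHom.mem_ker, hχdef]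
      show QuotientGroup.mk' Kb (C.subtype x) = 1 ↔ _
      rw [← MonoidHom.mem_ker, QuotientGroup.ker_mk']
      exact Iff.rfl
    rw [h1]
    constructor
    · intro hx
      show (x : ↥Y ⧸ T') ∈ Z
      exact ⟨x.2, hx⟩
    · intro hx
      have hx' : (x : ↥Y ⧸ T') ∈ Z := hx
      exact hx'.2
  have hQKj : IsSigmaNumber σ j (Nat.card ((↥Y ⧸ T') ⧸ Kb)) := by
    have hker : ∀ x ∈ NC, ((QuotientGroup.mk' Kb).comp π) x = 1 := by
      intro x hx
      simp only [MonoidHom.comp_apply]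
      rw [← MonoidHom.mem_ker, QuotientGroup.ker_mk']
      exact ⟨x, hx, rfl⟩
    have hθs : Function.Surjective (QuotientGroup.lift NC ((QuotientGroup.mk' Kb).comp π) hker) := by
      intro q
      obtain ⟨qq, rfl⟩ := QuotientGroup.mk'_surjective Kb q
      obtain ⟨y, rfl⟩ := hπs qq
      exact ⟨QuotientGroup.mk y, rfl⟩
    exact sigma_dvd σ j hQ (card_dvd_of_surj _ hθs)
  have hCZj : IsSigmaNumber σ j (Nat.card (↥C ⧸ Z')) := by
    have h1 : Nat.card (↥C ⧸ Z') = Nat.card χ.range := by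
      rw [← hχker]
      exact Nat.card_congr (QuotientGroup.quotientKerEquivRange χ).toEquiv
    refine fun p hp hpd => hQKj p hp ?_
    rw [h1] at hpd
    exact hpd.trans (Subgroup.card_subgroup_dvd_card _)
  have hDb_card : Nat.card Db ∣ Nat.card D := by
    have h1 := card_map_dvd π (D.subgroupOf Y)
    have h2 : Nat.card (D.subgroupOf Y) = Nat.card D :=
      Nat.card_congr (Subgroup.subgroupOfEquivOfLe hDY).toEquiv
    rwa [h2] at h1
  set W := (Db.subgroupOf C).map (QuotientGroup.mk' Z') with hWdef
  have hW_D : Nat.card W ∣ Nat.card D := by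
    have h1 := card_map_dvd (QuotientGroup.mk' Z') (Db.subgroupOf C)
    have h2 : Nat.card (Db.subgroupOf C) = Nat.card Db :=
      Nat.card_congr (Subgroup.subgroupOfEquivOfLe hDbC).toEquiv
    rw [h2] at h1
    exact h1.trans hDb_card
  have hW_CZ : Nat.card W ∣ Nat.card (↥C ⧸ Z') := Subgroup.card_subgroup_dvd_card W
  by_cases hW1 : Nat.card W = 1
  · -- Db is trivial so D ≤ T
    have hWbot : W = ⊥ := Subgroup.card_eq_one.mp hW1
    have hDbZ : Db ≤ Z := by
      intro x hx
      have hxC : x ∈ C := hDbC hx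
      have hmem : QuotientGroup.mk' Z' ⟨x, hxC⟩ ∈ W := ⟨⟨x, hxC⟩, hx, rfl⟩
      rw [hWbot, Subgroup.mem_bot] at hmem
      have h2 : (⟨x, hxC⟩ : ↥C) ∈ Z' := by
        rw [← QuotientGroup.ker_mk' Z']
        exact hmem
      exact h2
    have hDb1 : Nat.card Db = 1 := by
      by_contra h
      obtain ⟨q, hq, hqd⟩ := Nat.exists_prime_and_dvd h
      have hqi : q ∈ σ i := hDσ q hq (hqd.trans hDb_card)
      exact hZσ' q hq hqi (hqd.trans (Subgroup.card_dvd_of_le hDbZ))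
    have hDbbot : Db = ⊥ := Subgroup.card_eq_one.mp hDb1
    have hDT : D ≤ T := by
      intro d hd
      have hdY : d ∈ Y := hDY hd
      have hmem : π ⟨d, hdY⟩ ∈ Db := ⟨⟨d, hdY⟩, hd, rfl⟩
      rw [hDbbot, Subgroup.mem_bot] at hmem
      have h2 : (⟨d, hdY⟩ : ↥Y) ∈ T' := by rw [← hπker]; exact hmem
      exact h2
    exact hDT.trans hT_oY
  · obtain ⟨q, hq, hqd⟩ := Nat.exists_prime_and_dvd hW1
    have hqi : q ∈ σ i := hDσ q hq (hqd.trans hW_D)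
    have hqj : q ∈ σ j := hCZj q hq (hqd.trans hW_CZ)
    have hij := hu q hq hqi hqj
    have hCZi : IsSigmaNumber σ i (Nat.card (↥C ⧸ Z')) := by rw [hij]; exact hCZj
    have hcZ' : Nat.card Z' = Nat.card Z :=
      Nat.card_congr (Subgroup.subgroupOfEquivOfLe hZC).toEquiv
    have hidx : Z'.index = Nat.card (↥C ⧸ Z') := Subgroup.index_eq_card Z'
    have hcop : (Nat.card Z').Coprime Z'.index := by
      show Nat.gcd (Nat.card Z') Z'.index = 1
      by_contra hg
      obtain ⟨q', hq', hq'd⟩ := Nat.exists_prime_and_dvd hg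
      have h1 : q' ∣ Nat.card Z' := hq'd.trans (Nat.gcd_dvd_left _ _)
      have h2 : q' ∣ Z'.index := hq'd.trans (Nat.gcd_dvd_right _ _)
      have hq'i : q' ∈ σ i := hCZi q' hq' (hidx ▸ h2)
      rw [hcZ'] at h1
      exact hZσ' q' hq' hq'i h1
    obtain ⟨Lc, hLc⟩ := Subgroup.exists_right_complement'_of_coprime hcop
    have hLccard : Nat.card Z' * Nat.card Lc = Nat.card C := hLc.card_mul
    have hZ'pos : 0 < Nat.card Z' := Nat.card_pos
    have hLcidx : Nat.card Lc = Z'.index := by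
      have h1 := Subgroup.card_mul_index Z'
      apply Nat.eq_of_mul_eq_mul_left hZ'pos
      rw [hLccard, h1]
    have hLcσ : IsSigmaNumber σ i (Nat.card Lc) := by
      rw [hLcidx, hidx]; exact hCZi
    have hchar : ∀ c : ↥C, IsSigmaNumber σ i (orderOf c) → c ∈ Lc := by
      intro c hc
      obtain ⟨⟨z, l⟩, hzl, -⟩ := Subgroup.IsComplement.existsUnique hLc c
      have hzc : ∀ w : ↥C, (z : ↥C) * w = w * (z : ↥C) := by
        intro w
        have h := hZcen (((z : ↥C) : ↥Y ⧸ T')) z.2 (((w : ↥C) : ↥Y ⧸ T')) w.2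
        exact Subtype.ext h
      have hcommzl : Commute (z : ↥C) (l : ↥C) := hzc l
      have hpow : (z : ↥C) ^ orderOf c * (l : ↥C) ^ orderOf c = 1 := by
        rw [← Commute.mul_pow hcommzl, hzl, pow_orderOf_eq_one]
      have hzn : (z : ↥C) ^ orderOf c ∈ Z' := pow_mem z.2 (orderOf c)
      have hzn' : (z : ↥C) ^ orderOf c ∈ Lc := by
        have he : (z : ↥C) ^ orderOf c = ((l : ↥C) ^ orderOf c)⁻¹ := by
          rw [eq_inv_iff_mul_eq_one]; exact hpow
        rw [he]
        exact inv_mem (pow_mem l.2 (orderOf c))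
      have hbot : (z : ↥C) ^ orderOf c = 1 := by
        have h := hLc.disjoint.le_bot (⟨hzn, hzn'⟩ : _ ∈ Z' ⊓ Lc)
        rwa [Subgroup.mem_bot] at h
      have hordz : orderOf (z : ↥C) ∣ orderOf c := orderOf_dvd_of_pow_eq_one hbot
      have hordz1 : orderOf (z : ↥C) = 1 := by
        by_contra h
        obtain ⟨q', hq', hq'd⟩ := Nat.exists_prime_and_dvd h
        have h1 : q' ∈ σ i := hc q' hq' (hq'd.trans hordz)
        have h2 : q' ∣ Nat.card Z' := hq'd.trans (Subgroup.orderOf_dvd_natCard Z' z.2)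
        rw [hcZ'] at h2
        exact hZσ' q' hq' h1 h2
      have hz1 : (z : ↥C) = 1 := orderOf_eq_one_iff.mp hordz1
      rw [← hzl, hz1, one_mul]
      exact l.2
    set Lq := Lc.map C.subtype with hLqdef
    have hLqC : Lq ≤ C := Subgroup.map_subtype_le _
    have hLqcard : Nat.card Lq = Nat.card Lc :=
      (Nat.card_congr (Subgroup.equivMapOfInjective Lc _
        (Subgroup.subtype_injective C)).toEquiv).symm
    have hLq_stab : ∀ g : ↥Y ⧸ T', ∀ x ∈ Lq, g * x * g⁻¹ ∈ Lq := by
      intro g x hx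
      have hxC : x ∈ C := hLqC hx
      have hord : IsSigmaNumber σ i (orderOf x) := by
        obtain ⟨l, hl, rfl⟩ := hx
        have he : orderOf (C.subtype l) = orderOf l :=
          orderOf_injective C.subtype (Subgroup.subtype_injective C) l
        rw [he]
        exact sigma_dvd σ i hLcσ (Subgroup.orderOf_dvd_natCard Lc hl)
      have hgC : g * x * g⁻¹ ∈ C := hCN.conj_mem x hxC g
      have hordc : orderOf (g * x * g⁻¹) = orderOf x := by
        have h := orderOf_injective (MulAut.conj g).toMonoidHom (MulAut.conj g).injective x
        simpa [MulAut.conj_apply] using h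
      have hc' : (⟨g * x * g⁻¹, hgC⟩ : ↥C) ∈ Lc := by
        apply hchar
        have he : orderOf (⟨g * x * g⁻¹, hgC⟩ : ↥C) = orderOf (g * x * g⁻¹) := by
          rw [← orderOf_injective C.subtype (Subgroup.subtype_injective C) ⟨g * x * g⁻¹, hgC⟩]
          rfl
        rw [he, hordc]
        exact hord
      exact ⟨_, hc', rfl⟩
    have hDbLq : Db ≤ Lq := by
      intro x hx
      have hxC : x ∈ C := hDbC hx
      have hord : IsSigmaNumber σ i (orderOf x) :=
        sigma_dvd σ i (sigma_dvd σ i hDσ hDb_card) (Subgroup.orderOf_dvd_natCard Db hx)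
      have hc' : (⟨x, hxC⟩ : ↥C) ∈ Lc := by
        apply hchar
        have he : orderOf (⟨x, hxC⟩ : ↥C) = orderOf x := by
          rw [← orderOf_injective C.subtype (Subgroup.subtype_injective C) ⟨x, hxC⟩]
          rfl
        rw [he]
        exact hord
      exact ⟨_, hc', rfl⟩
    set M := Lq.comap π with hMdef
    have hTM : π.ker ≤ M := by
      intro t ht
      have h1 : π t = 1 := ht
      show π t ∈ Lq
      rw [h1]; exact one_mem _
    have hMcard := card_comap_ker_le π M hTM
    have hMmap : M.map π = Lq := Subgroup.map_comap_eq_self_of_surjective hπs Lq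
    have hMσ : IsSigmaNumber σ i (Nat.card M) := by
      rw [hMcard, hMmap, hπker]
      have hcT' : Nat.card T' = Nat.card T :=
        Nat.card_congr (Subgroup.subgroupOfEquivOfLe hTY).toEquiv
      rw [hcT', hLqcard]
      exact sigma_mul σ i hLcσ hTσ
    have hLpre : M.map Y.subtype ∈ S σ i Y := by
      refine ⟨Subgroup.map_subtype_le _, ?_, ?_⟩
      · rintro y hy x ⟨x', hx', rfl⟩
        refine ⟨⟨y, hy⟩ * x' * ⟨y, hy⟩⁻¹, ?_, rfl⟩
        show π (⟨y, hy⟩ * x' * ⟨y, hy⟩⁻¹) ∈ Lq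
        rw [map_mul, map_mul, map_inv]
        exact hLq_stab _ _ hx'
      · rwa [Nat.card_congr (Subgroup.equivMapOfInjective M _
          (Subgroup.subtype_injective Y)).toEquiv.symm]
    have hDLpre : D ≤ M.map Y.subtype := by
      intro d hd
      have hdY : d ∈ Y := hDY hd
      refine ⟨⟨d, hdY⟩, ?_, rfl⟩
      show π ⟨d, hdY⟩ ∈ Lq
      exact hDbLq ⟨⟨d, hdY⟩, hd, rfl⟩
    exact hDLpre.trans (le_oCore σ i hLpre)

end SigmaAux

namespace SigmaAux

variable {ι : Type*} (σ : ι → Set ℕ) (i : ι) {G : Type*} [Group G]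

theorem step_mono [Finite G] {X Y : Subgroup G}
    (hu : ∀ (j : ι) (p : ℕ), p.Prime → p ∈ σ i → p ∈ σ j → i = j)
    (h : SigmaSubnormalStep σ X Y) : oCore σ i X ≤ oCore σ i Y := by
  obtain ⟨hXY, hn | hp⟩ := h
  · exact le_oCore σ i (oCore_mem_S σ i hXY (cstab_of_subgroupOf_normal hXY hn))
  · obtain ⟨j, hj⟩ := hp
    exact step_primary σ i hXY (hu j) hj

end SigmaAux

/-- A σ-subnormal `σ i`-subgroup of a finite group lies in `O_{σ i}(G)`. -/
theorem statement_5 {ι : Type*} (σ : ι → Set ℕ) (hσ : IsPrimePartition σ)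
    {G : Type*} [Group G] [Finite G] (A : Subgroup G) (i : ι)
    (hA : IsSigmaSubnormal σ A) (hAi : IsSigmaIGroup σ i ↥A) :
    A ≤ sigmaCore σ i G := by
  obtain ⟨n, Cc, hC0, hClast, hstep⟩ := hA
  have hu : ∀ (j : ι) (p : ℕ), p.Prime → p ∈ σ i → p ∈ σ j → i = j := by
    intro j p hp hpi hpj
    obtain ⟨c, hc, huc⟩ := hσ.existsUnique_mem p hp
    rw [huc i hpi, huc j hpj]
  have hmono : ∀ k : Fin (n + 1), SigmaAux.oCore σ i (Cc 0) ≤ SigmaAux.oCore σ i (Cc k) := by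
    intro k
    induction k using Fin.induction with
    | zero => exact le_refl _
    | succ k ih => exact ih.trans (SigmaAux.step_mono σ i hu (hstep k))
  have hA0 : A ≤ SigmaAux.oCore σ i A :=
    SigmaAux.le_oCore σ i ⟨le_refl A, SigmaAux.cstab_self A, hAi⟩
  have h1 : A ≤ SigmaAux.oCore σ i (⊤ : Subgroup G) := by
    have h2 := hmono (Fin.last n)
    rw [hC0, hClast] at h2
    exact hA0.trans h2
  refine h1.trans (le_sSup ?_)
  refine ⟨?_, SigmaAux.card_oCore σ i ⊤⟩
  constructor
  intro x hx g
  exact SigmaAux.cstab_oCore σ i (SigmaAux.cstab_self ⊤) g trivial x hx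
end

section
/- Let σ be a partition of the primes and A a σ-subnormal subgroup of a finite group G which is also a Hall σ_i-subgroup of G for some i. Then A is normal in G. -/
open Subgroup
open scoped Pointwise

section AuxProof

variable {ι : Type*} {σ : ι → Set ℕ}

private lemma sigmaNumber_of_dvd' {i : ι} {m n : ℕ} (h : IsSigmaNumber σ i n) (hd : m ∣ n) :
    IsSigmaNumber σ i m := fun p hp hpm => h p hp (hpm.trans hd)

private lemma block_eq' (hσ : IsPrimePartition σ) {i j : ι} {p : ℕ}
    (hp : p ∈ σ i) (hq : p ∈ σ j) : i = j := by
  obtain ⟨k, _, hk⟩ := hσ.existsUnique_mem p (hσ.prime_of_mem i p hp)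
  rw [hk i hp, hk j hq]

/-- A σ_i-number with no prime in σ i dividing it is 1 (when nonzero). -/
private lemma eq_one_of_sigma' {i : ι} {n : ℕ} (hn : n ≠ 0) (h1 : IsSigmaNumber σ i n)
    (h2 : ∀ p : ℕ, p.Prime → p ∣ n → p ∉ σ i) : n = 1 := by
  by_contra hne
  obtain ⟨p, hp, hpd⟩ := Nat.exists_prime_and_dvd hne
  exact h2 p hp hpd (h1 p hp hpd)

/-- Elements of a Hall σ_i-subgroup have σ_i-order. -/
private lemma order_sigma' {G : Type*} [Group G] [Finite G] {A : Subgroup G} {i : ι}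
    (hHall : IsHallSigmaI σ i A) {a : G} (ha : a ∈ A) :
    IsSigmaNumber σ i (orderOf a) := by
  refine sigmaNumber_of_dvd' hHall.1 ?_
  have := orderOf_dvd_natCard (⟨a, ha⟩ : A)
  rwa [Subgroup.orderOf_mk] at this

/-- An element of `B` with σ_i-order lies in a normal Hall σ_i-subgroup `A ≤ B`. -/
private lemma mem_of_sigma_order' {G : Type*} [Group G] [Finite G] {A B : Subgroup G} {i : ι}
    (hAB : A ≤ B) (hHall : IsHallSigmaI σ i A) (hn : (A.subgroupOf B).Normal)
    {b : G} (hb : b ∈ B) (hord : IsSigmaNumber σ i (orderOf b)) : b ∈ A := by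
  haveI := hn
  set x : ↥B ⧸ (A.subgroupOf B) := QuotientGroup.mk ⟨b, hb⟩ with hx
  have h1 : orderOf x ∣ orderOf b := by
    have h2 := orderOf_map_dvd (QuotientGroup.mk' (A.subgroupOf B)) (⟨b, hb⟩ : B)
    rwa [Subgroup.orderOf_mk] at h2
  have h2 : orderOf x ∣ A.index := by
    refine (orderOf_dvd_natCard x).trans ?_
    have : Nat.card (↥B ⧸ (A.subgroupOf B)) = A.relIndex B := rfl
    rw [this]
    exact relIndex_dvd_index_of_le hAB
  have hone : orderOf x = 1 := by
    by_contra hne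
    obtain ⟨p, hp, hpd⟩ := Nat.exists_prime_and_dvd hne
    exact hHall.2 p hp (hpd.trans h2) (hord p hp (hpd.trans h1))
  have : x = 1 := orderOf_eq_one_iff.mp hone
  rw [hx, QuotientGroup.eq_one_iff] at this
  exact this

/-- Key step: if `A` is Hall σ_i and normal in `B`, and `B → C` is a σ-subnormal step,
then `A` is normal in `C`. -/
private lemma step_normal' (hσ : IsPrimePartition σ) {G : Type*} [Group G] [Finite G]
    {A B C : Subgroup G} {i : ι} (hHall : IsHallSigmaI σ i A)
    (hAB : A ≤ B) (hn : (A.subgroupOf B).Normal)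
    (hstep : SigmaSubnormalStep σ B C) :
    A ≤ C ∧ (A.subgroupOf C).Normal := by
  obtain ⟨hBC, hcase⟩ := hstep
  have hAC : A ≤ C := hAB.trans hBC
  refine ⟨hAC, ?_⟩
  rcases hcase with hN | ⟨j, hj⟩
  · -- `B` is normal in `C`
    constructor
    rintro ⟨x, hxC⟩ hx g
    rw [mem_subgroupOf] at hx ⊢
    have hxB : ((g * ⟨x, hxC⟩ * g⁻¹ : ↥C) : G) ∈ B := by
      have := hN.conj_mem ⟨x, hxC⟩ (mem_subgroupOf.mpr (hAB hx)) g
      exact (mem_subgroupOf).mp this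
    refine mem_of_sigma_order' hAB hHall hn hxB ?_
    have hco : ((g * ⟨x, hxC⟩ * g⁻¹ : ↥C) : G) = ↑g * x * (↑g)⁻¹ := by push_cast; ring_nf
    rw [hco]
    have hsc : SemiconjBy (g : G) x (↑g * x * (↑g)⁻¹) := by
      unfold SemiconjBy; group
    rw [← hsc.orderOf_eq (g : G)]
    exact order_sigma' hHall hx
  · -- the quotient `C ⧸ core` is a σ_j-group
    set N : Subgroup ↥C := (B.subgroupOf C).normalCore with hNdef
    haveI : N.Normal := Subgroup.normalCore_normal _
    by_cases hij : j = i
    · -- in this case `B = C`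
      subst hij
      have hBC' : B = C := by
        have hNB : (N.map C.subtype) ≤ B := by
          rintro _ ⟨y, hy, rfl⟩
          exact (mem_subgroupOf).mp ((B.subgroupOf C).normalCore_le hy)
        have hcard : Nat.card (↥C ⧸ N) = (N.map C.subtype).relIndex C := by
          have : (N.map C.subtype).subgroupOf C = N :=
            comap_map_eq_self_of_injective C.subtype_injective N
          rw [Subgroup.relIndex, this]; rfl
        have hdvd1 : B.relIndex C ∣ Nat.card (↥C ⧸ N) := by
          rw [hcard]
          exact relIndex_dvd_of_le_left C hNB
        have hdvd2 : B.relIndex C ∣ A.index := by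
          have h1 : A.relIndex B * B.relIndex C = A.relIndex C :=
            relIndex_mul_relIndex A B C hAB hBC
          have h2 : A.relIndex C ∣ A.index := relIndex_dvd_index_of_le hAC
          exact (Dvd.intro_left _ h1).trans h2
        have hnum : IsSigmaNumber σ j (B.relIndex C) := sigmaNumber_of_dvd' hj hdvd1
        have hnz : B.relIndex C ≠ 0 := by
          intro h0
          have := h0 ▸ hdvd2
          have : A.index = 0 := zero_dvd_iff.mp this
          exact A.index_ne_zero_of_finite this
        have hone : B.relIndex C = 1 :=
          eq_one_of_sigma' hnz hnum (fun p hp hpd => hHall.2 p hp (hpd.trans hdvd2))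
        exact le_antisymm hBC (relIndex_eq_one.mp hone)
      rw [← hBC']
      exact hn
    · -- here `A ≤ N` and conjugates of `A`-elements stay in `N ≤ B`
      have hAN : ∀ x : G, x ∈ A → ∀ hxC : x ∈ C, (⟨x, hxC⟩ : ↥C) ∈ N := by
        intro x hx hxC
        set q : ↥C ⧸ N := QuotientGroup.mk ⟨x, hxC⟩ with hq
        have h1 : orderOf q ∣ orderOf x := by
          have h2 := orderOf_map_dvd (QuotientGroup.mk' N) (⟨x, hxC⟩ : ↥C)
          rwa [Subgroup.orderOf_mk] at h2
        have h2 : orderOf q ∣ Nat.card (↥C ⧸ N) := orderOf_dvd_natCard q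
        have hone : orderOf q = 1 := by
          by_contra hne
          obtain ⟨p, hp, hpd⟩ := Nat.exists_prime_and_dvd hne
          exact hij (block_eq' hσ (hj p hp (hpd.trans h2))
            (order_sigma' hHall hx p hp (hpd.trans h1)))
        have : q = 1 := orderOf_eq_one_iff.mp hone
        rw [hq, QuotientGroup.eq_one_iff] at this
        exact this
      constructor
      rintro ⟨x, hxC⟩ hx g
      rw [mem_subgroupOf] at hx ⊢
      have hxB : ((g * ⟨x, hxC⟩ * g⁻¹ : ↥C) : G) ∈ B := by
        have hmem : (g * ⟨x, hxC⟩ * g⁻¹ : ↥C) ∈ N :=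
          (by infer_instance : N.Normal).conj_mem _ (hAN x hx hxC) g
        exact (mem_subgroupOf).mp ((B.subgroupOf C).normalCore_le hmem)
      refine mem_of_sigma_order' hAB hHall hn hxB ?_
      have hco : ((g * ⟨x, hxC⟩ * g⁻¹ : ↥C) : G) = ↑g * x * (↑g)⁻¹ := by push_cast; ring_nf
      rw [hco]
      have hsc : SemiconjBy (g : G) x (↑g * x * (↑g)⁻¹) := by
        unfold SemiconjBy; group
      rw [← hsc.orderOf_eq (g : G)]
      exact order_sigma' hHall hx

end AuxProof

/-- A σ-subnormal Hall `σ i`-subgroup of a finite group is normal. -/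
theorem statement_6 {ι : Type*} (σ : ι → Set ℕ) (hσ : IsPrimePartition σ)
    {G : Type*} [Group G] [Finite G] (A : Subgroup G) (i : ι)
    (hA : IsSigmaSubnormal σ A) (hHall : IsHallSigmaI σ i A) :
    A.Normal := by
  obtain ⟨n, C, hC0, hClast, hstepC⟩ := hA
  have key : ∀ k : ℕ, ∀ hk : k ≤ n,
      A ≤ C ⟨k, Nat.lt_succ_of_le hk⟩ ∧ (A.subgroupOf (C ⟨k, Nat.lt_succ_of_le hk⟩)).Normal := by
    intro k
    induction k with
    | zero =>
      intro _
      have h0 : C ⟨0, Nat.lt_succ_of_le (Nat.zero_le n)⟩ = A := hC0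
      rw [h0]
      exact ⟨le_rfl, by rw [subgroupOf_self]; infer_instance⟩
    | succ k ih =>
      intro hk
      obtain ⟨h1, h2⟩ := ih (Nat.le_of_succ_le hk)
      have hs := hstepC ⟨k, hk⟩
      exact step_normal' hσ hHall h1 h2 hs
  obtain ⟨h1, h2⟩ := key n le_rfl
  have hlast : C ⟨n, Nat.lt_succ_of_le le_rfl⟩ = ⊤ := hClast
  rw [hlast] at h2
  constructor
  intro a ha g
  have := h2.conj_mem ⟨a, mem_top _⟩ (mem_subgroupOf.mpr ha) ⟨g, mem_top _⟩
  simpa [mem_subgroupOf] using this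
end

section
/- Let σ be a partition of the primes and A a σ-subnormal subgroup of a finite group G. Then the σ-nilpotent residual A^{𝔑_σ} of A is subnormal in G. -/
open Subgroup
open scoped Pointwise

section Helpers

variable {ι : Type*} {G : Type*} [Group G]

/-- Relative subnormality: there is a chain from `R` to `B` with each term normal
in the next. -/
def SubnormalIn (R B : Subgroup G) : Prop :=
  ∃ n, ∃ C : Fin (n + 1) → Subgroup G, C 0 = R ∧ C (Fin.last n) = B ∧
    ∀ k : Fin n, C k.castSucc ≤ C k.succ ∧ ((C k.castSucc).subgroupOf (C k.succ)).Normal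

lemma subgroupOf_normal_of {X Y : Subgroup G}
    (h : ∀ x ∈ X, x ∈ Y → ∀ g ∈ Y, g * x * g⁻¹ ∈ X) : (X.subgroupOf Y).Normal := by
  constructor
  rintro ⟨x, hxY⟩ hx ⟨g, hgY⟩
  rw [Subgroup.mem_subgroupOf] at hx ⊢
  exact h x hx hxY g hgY

lemma subnormalIn_of_step {R B : Subgroup G} (h1 : R ≤ B) (h2 : (R.subgroupOf B).Normal) :
    SubnormalIn R B := by
  refine ⟨1, ![R, B], rfl, rfl, fun k => ?_⟩
  fin_cases k
  exact ⟨h1, h2⟩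

lemma SubnormalIn.snoc {R M B : Subgroup G} (h : SubnormalIn R M) (h1 : M ≤ B)
    (h2 : (M.subgroupOf B).Normal) : SubnormalIn R B := by
  obtain ⟨m, D, hD0, hDl, hDs⟩ := h
  refine ⟨m + 1, Fin.snoc D B, ?_, ?_, ?_⟩
  · have : ((0 : Fin (m + 1)).castSucc) = (0 : Fin (m + 2)) := rfl
    rw [← this, Fin.snoc_castSucc, hD0]
  · rw [Fin.snoc_last]
  · intro k
    induction k using Fin.lastCases with
    | last =>
      rw [Fin.succ_last, Fin.snoc_castSucc, Fin.snoc_last, hDl]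
      exact ⟨h1, h2⟩
    | cast j =>
      rw [Fin.succ_castSucc, Fin.snoc_castSucc, Fin.snoc_castSucc]
      exact hDs j

lemma SubnormalIn.inf_right {R M K : Subgroup G} (h : SubnormalIn R M) (h1 : R ≤ K)
    (h2 : K ≤ M) : SubnormalIn R K := by
  obtain ⟨m, D, hD0, hDl, hDs⟩ := h
  refine ⟨m, fun k => D k ⊓ K, ?_, ?_, ?_⟩
  · show D 0 ⊓ K = R
    rw [hD0]; exact inf_eq_left.mpr h1
  · show D (Fin.last m) ⊓ K = K
    rw [hDl]; exact inf_eq_right.mpr h2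
  · intro k
    refine ⟨inf_le_inf_right K (hDs k).1, ?_⟩
    apply subgroupOf_normal_of
    intro x hx hxY g hg
    rw [Subgroup.mem_inf] at hx hxY hg ⊢
    constructor
    · have hn := (hDs k).2
      have := hn.conj_mem ⟨x, hxY.1⟩ (by rw [Subgroup.mem_subgroupOf]; exact hx.1) ⟨g, hg.1⟩
      rw [Subgroup.mem_subgroupOf] at this
      exact this
    · exact mul_mem (mul_mem hg.2 hx.2) (inv_mem hg.2)

lemma normal_sInf {S : Set (Subgroup G)} (h : ∀ N ∈ S, N.Normal) : (sInf S).Normal := by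
  constructor
  intro x hx g
  rw [Subgroup.mem_sInf] at hx ⊢
  intro N hN
  exact (h N hN).conj_mem x (hx N hN) g

lemma sigmaNilpotentResidual_normal (σ : ι → Set ℕ) (X : Type*) [Group X] :
    (sigmaNilpotentResidual σ X).Normal :=
  normal_sInf (by rintro N ⟨hN, -⟩; exact hN)

lemma isSigmaNilpotent_of_sigmaI (σ : ι → Set ℕ) (i : ι) (X : Type*) [Group X]
    (h : IsSigmaIGroup σ i X) : IsSigmaNilpotent σ X := by
  classical
  refine ⟨fun j => if j = i then ⊤ else ⊥, fun j => ?_, fun j => ?_, fun j => ?_, ?_⟩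
  · dsimp only; split <;> infer_instance
  · show IsSigmaIGroup σ j ↥(if j = i then (⊤ : Subgroup X) else ⊥)
    rcases eq_or_ne j i with rfl | hj
    · rw [if_pos rfl]
      intro p hp hdvd
      rw [Subgroup.card_top] at hdvd
      exact h p hp hdvd
    · rw [if_neg hj]
      intro p hp hdvd
      rw [Subgroup.card_bot] at hdvd
      exact absurd (Nat.eq_one_of_dvd_one hdvd) hp.ne_one
  · rcases eq_or_ne j i with rfl | hj
    · have : (⨆ k, ⨆ (_ : k ≠ j), if k = j then (⊤ : Subgroup X) else ⊥) = ⊥ := by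
        refine le_antisymm (iSup_le fun k => iSup_le fun hk => ?_) bot_le
        rw [if_neg hk]
      rw [this]
      exact disjoint_bot_right
    · dsimp only
      rw [if_neg hj]
      exact disjoint_bot_left
  · refine le_antisymm le_top ?_
    have h1 := le_iSup (fun j => if j = i then (⊤ : Subgroup X) else ⊥) i
    rwa [if_pos rfl] at h1

/-- The key step: if `A ≤ B` and `B ⧸ Q` is σ-primary for a normal `Q ≤ B`, then the
σ-nilpotent residual of `A` lies in (the image in `G` of) `Q`. -/
lemma residual_le_of_primary (σ : ι → Set ℕ) {A B : Subgroup G}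
    (hAB : A ≤ B) {Q : Subgroup ↥B} (hQ : Q.Normal)
    (hprim : IsSigmaPrimary σ (↥B ⧸ Q)) :
    (sigmaNilpotentResidual σ ↥A).map A.subtype ≤ Q.map B.subtype := by
  obtain ⟨i, hi⟩ := hprim
  set K := Q.map B.subtype with hK
  set N' := K.subgroupOf A with hN'
  have hN'normal : N'.Normal := by
    constructor
    intro n hn g
    rw [hN', Subgroup.mem_subgroupOf] at hn ⊢
    obtain ⟨q, hq, hq2⟩ := hn
    have hgB : (↑g : G) ∈ B := hAB g.2
    have hnB : (↑n : G) ∈ B := hAB n.2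
    have hconj := hQ.conj_mem q hq ⟨↑g, hgB⟩
    refine ⟨_, hconj, ?_⟩
    simp only [Subgroup.coe_subtype, Subgroup.coe_mul, Subgroup.coe_inv] at hq2 ⊢
    rw [hq2]
  have hle : sigmaNilpotentResidual σ ↥A ≤ N' := by
    apply sInf_le
    refine ⟨hN'normal, ?_⟩
    set f : ↥A →* ↥B ⧸ Q := (QuotientGroup.mk' Q).comp (Subgroup.inclusion hAB) with hf
    have hker : f.ker = N' := by
      ext a
      rw [MonoidHom.mem_ker, hf, MonoidHom.comp_apply, QuotientGroup.mk'_apply,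
        QuotientGroup.eq_one_iff, hN', Subgroup.mem_subgroupOf]
      constructor
      · intro h
        exact ⟨_, h, rfl⟩
      · rintro ⟨q, hq, hq2⟩
        have hqe : q = Subgroup.inclusion hAB a := by
          apply Subtype.ext
          rw [Subgroup.coe_inclusion]
          exact hq2
        rwa [hqe] at hq
    have hcard : Nat.card (↥A ⧸ N') ∣ Nat.card (↥B ⧸ Q) := by
      rw [← hker]
      rw [Nat.card_congr (QuotientGroup.quotientKerEquivRange f).toEquiv]
      exact Subgroup.card_subgroup_dvd_card f.range
    exact isSigmaNilpotent_of_sigmaI σ i _ (fun p hp hdvd => hi p hp (hdvd.trans hcard))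
  calc (sigmaNilpotentResidual σ ↥A).map A.subtype
      ≤ N'.map A.subtype := Subgroup.map_mono hle
    _ = K ⊓ A := Subgroup.subgroupOf_map_subtype K A
    _ ≤ K := inf_le_left

end Helpers


/-- If `A` is σ-subnormal in the finite group `G`, then the σ-nilpotent residual
`A^{𝔑_σ}` of `A` is subnormal in `G`. -/
theorem statement_8 {ι : Type*} (σ : ι → Set ℕ) (hσ : IsPrimePartition σ)
    {G : Type*} [Group G] [Finite G] (A : Subgroup G)
    (hA : IsSigmaSubnormal σ A) :
    IsSubnormalSub ((sigmaNilpotentResidual σ ↥A).map A.subtype) := by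
  suffices H : ∀ n (A B : Subgroup G) (C : Fin (n+1) → Subgroup G), C 0 = A →
      C (Fin.last n) = B →
      (∀ k : Fin n, SigmaSubnormalStep σ (C k.castSucc) (C k.succ)) →
      SubnormalIn ((sigmaNilpotentResidual σ ↥A).map A.subtype) B ∧ A ≤ B by
    obtain ⟨n, C, hC0, hClast, hstep⟩ := hA
    exact (H n A ⊤ C hC0 hClast hstep).1
  intro n
  induction n with
  | zero =>
    intro A B C h0 hl _
    have hAB : A = B := by rw [← h0, ← hl]; rfl
    subst hAB
    have hres : ((sigmaNilpotentResidual σ ↥A).map A.subtype).subgroupOf A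
        = sigmaNilpotentResidual σ ↥A :=
      Subgroup.comap_map_eq_self_of_injective A.subtype_injective _
    refine ⟨subnormalIn_of_step (Subgroup.map_subtype_le _) ?_, le_refl A⟩
    rw [hres]
    exact sigmaNilpotentResidual_normal σ ↥A
  | succ n ih =>
    intro A B C h0 hl hstep
    set M := C ((Fin.last n).castSucc) with hM
    have hIH := ih A M (fun k => C k.castSucc) h0 rfl
      (fun k => by
        show SigmaSubnormalStep σ (C k.castSucc.castSucc) (C k.succ.castSucc)
        rw [← Fin.succ_castSucc]
        exact hstep k.castSucc)
    obtain ⟨hsubM, hAM⟩ := hIH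
    have hlast := hstep (Fin.last n)
    rw [Fin.succ_last, hl] at hlast
    obtain ⟨hMB, hcase⟩ := hlast
    refine ⟨?_, hAM.trans hMB⟩
    rcases hcase with hnorm | hprim
    · exact hsubM.snoc hMB hnorm
    · set Q := (M.subgroupOf B).normalCore with hQ
      set K := Q.map B.subtype with hKdef
      have hQn : Q.Normal := Subgroup.normalCore_normal _
      have hRK : (sigmaNilpotentResidual σ ↥A).map A.subtype ≤ K :=
        residual_le_of_primary σ (hAM.trans hMB) hQn hprim
      have hKM : K ≤ M := by
        calc K ≤ (M.subgroupOf B).map B.subtype :=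
              Subgroup.map_mono (Subgroup.normalCore_le _)
          _ = M ⊓ B := Subgroup.subgroupOf_map_subtype M B
          _ ≤ M := inf_le_left
      have hKB : K ≤ B := Subgroup.map_subtype_le _
      have hKBnorm : (K.subgroupOf B).Normal := by
        have : K.subgroupOf B = Q :=
          Subgroup.comap_map_eq_self_of_injective B.subtype_injective _
        rw [this]
        exact hQn
      exact ((hsubM.inf_right hRK hKM).snoc hKB hKBnorm)
end
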